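/- arXiv:2601.09203 — 11 statements merged into one kernel-verified Lean document; each statement's English description precedes it below -/
import Mathlib

section
/- Let η_a, η_b, α_a, α_b be real numbers. If x, x' are real numbers in the interval [(1+η_a−|α_a|)/2, (1+η_a+|α_a|)/2] and y, y' are real numbers in the interval [(1+η_b−|α_b|)/2, (1+η_b+|α_b|)/2], then −|α_a·α_b| ≤ x·y − x·y' + x'·y + x'·y' − (1+η_b)·x' − (1+η_a)·y + ((1+η_a)(1+η_b) − |α_a·α_b|)/2 ≤ 0. -/
lemma ch_abs_sum (v v' B : ℝ) (h1 : |v| ≤ B / 2) (h2 : |v'| ≤ B / 2) :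
    |v - v'| + |v + v'| ≤ B := by
  obtain ⟨a1, a2⟩ := abs_le.mp h1
  obtain ⟨b1, b2⟩ := abs_le.mp h2
  rcases abs_cases (v - v') with ⟨e1, _⟩ | ⟨e1, _⟩ <;>
    rcases abs_cases (v + v') with ⟨e2, _⟩ | ⟨e2, _⟩ <;> rw [e1, e2] <;> linarith

lemma ch_core (u u' v v' A B : ℝ) (hu : |u| ≤ A / 2) (hu' : |u'| ≤ A / 2)
    (hv : |v| ≤ B / 2) (hv' : |v'| ≤ B / 2) :
    |u * v - u * v' + u' * v + u' * v'| ≤ A * B / 2 := by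
  have hA : (0:ℝ) ≤ A / 2 := le_trans (abs_nonneg u) hu
  have h2 := ch_abs_sum v v' B hv hv'
  have hn1 := abs_nonneg (v - v')
  have hn2 := abs_nonneg (v + v')
  calc |u * v - u * v' + u' * v + u' * v'|
      = |u * (v - v') + u' * (v + v')| := by ring_nf
    _ ≤ |u * (v - v')| + |u' * (v + v')| := abs_add_le _ _
    _ = |u| * |v - v'| + |u'| * |v + v'| := by rw [abs_mul, abs_mul]
    _ ≤ A / 2 * (|v - v'| + |v + v'|) := by nlinarith
    _ ≤ A / 2 * B := by nlinarith
    _ = A * B / 2 := by ring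

/-- Pointwise (per hidden variable) generalized Clauser–Horne inequality:
the response probabilities `x, x'` of party A lie between the extreme eigenvalues
`(1+ηa−|αa|)/2` and `(1+ηa+|αa|)/2` of the biased unsharp POVM element, and
similarly `y, y'` for party B; then the CH expression lies in `[−|αa·αb|, 0]`. -/
theorem generalized_CH_pointwise (ηa ηb αa αb x x' y y' : ℝ)
    (hx : x ∈ Set.Icc ((1 + ηa - |αa|) / 2) ((1 + ηa + |αa|) / 2))
    (hx' : x' ∈ Set.Icc ((1 + ηa - |αa|) / 2) ((1 + ηa + |αa|) / 2))
    (hy : y ∈ Set.Icc ((1 + ηb - |αb|) / 2) ((1 + ηb + |αb|) / 2))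
    (hy' : y' ∈ Set.Icc ((1 + ηb - |αb|) / 2) ((1 + ηb + |αb|) / 2)) :
    -|αa * αb| ≤
      x * y - x * y' + x' * y + x' * y' - (1 + ηb) * x' - (1 + ηa) * y
        + ((1 + ηa) * (1 + ηb) - |αa * αb|) / 2 ∧
    x * y - x * y' + x' * y + x' * y' - (1 + ηb) * x' - (1 + ηa) * y
        + ((1 + ηa) * (1 + ηb) - |αa * αb|) / 2 ≤ 0 := by
  obtain ⟨hx1, hx2⟩ := hx
  obtain ⟨hx1', hx2'⟩ := hx'
  obtain ⟨hy1, hy2⟩ := hy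
  obtain ⟨hy1', hy2'⟩ := hy'
  have hAB : |αa * αb| = |αa| * |αb| := abs_mul _ _
  have key := ch_core (x - (1 + ηa) / 2) (x' - (1 + ηa) / 2)
      (y - (1 + ηb) / 2) (y' - (1 + ηb) / 2) |αa| |αb|
      (abs_le.mpr ⟨by linarith, by linarith⟩) (abs_le.mpr ⟨by linarith, by linarith⟩)
      (abs_le.mpr ⟨by linarith, by linarith⟩) (abs_le.mpr ⟨by linarith, by linarith⟩)
  rw [abs_le] at key
  obtain ⟨k1, k2⟩ := key
  constructor <;> nlinarith [k1, k2]
end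

section
/- Let (Ω, μ) be a probability space, η_a, η_b, α_a, α_b real numbers, and f, f', g, g' : Ω → ℝ measurable functions with f(ω), f'(ω) ∈ [(1+η_a−|α_a|)/2, (1+η_a+|α_a|)/2] and g(ω), g'(ω) ∈ [(1+η_b−|α_b|)/2, (1+η_b+|α_b|)/2] for μ-almost every ω. Define B = ∫(f·g) dμ − ∫(f·g') dμ + ∫(f'·g) dμ + ∫(f'·g') dμ − (1+η_b)·∫f' dμ − (1+η_a)·∫g dμ + ((1+η_a)(1+η_b) − |α_a·α_b|)/2. Then −|α_a·α_b| ≤ B ≤ 0. -/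
open MeasureTheory

lemma chsh_abs (A D u u' v v' : ℝ)
    (hu : |u| ≤ A) (hu' : |u'| ≤ A) (hv : |v| ≤ D) (hv' : |v'| ≤ D) :
    |u*v - u*v' + u'*v + u'*v'| ≤ 2*A*D := by
  have hA : 0 ≤ A := le_trans (abs_nonneg u) hu
  obtain ⟨hv1, hv2⟩ := abs_le.mp hv
  obtain ⟨hv1', hv2'⟩ := abs_le.mp hv'
  have h1 : |v - v'| + |v + v'| ≤ 2*D := by
    rcases le_total 0 (v - v') with h | h <;> rcases le_total 0 (v + v') with h' | h' <;>
      first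
      | (rw [abs_of_nonneg h, abs_of_nonneg h']; linarith)
      | (rw [abs_of_nonneg h, abs_of_nonpos h']; linarith)
      | (rw [abs_of_nonpos h, abs_of_nonneg h']; linarith)
      | (rw [abs_of_nonpos h, abs_of_nonpos h']; linarith)
  calc |u*v - u*v' + u'*v + u'*v'| = |u*(v-v') + u'*(v+v')| := by ring_nf
    _ ≤ |u*(v-v')| + |u'*(v+v')| := abs_add_le _ _
    _ = |u| * |v-v'| + |u'| * |v+v'| := by rw [abs_mul, abs_mul]
    _ ≤ A * |v-v'| + A * |v+v'| := by gcongr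
    _ = A*(|v-v'| + |v+v'|) := by ring
    _ ≤ A*(2*D) := by gcongr
    _ = 2*A*D := by ring

lemma ch_pt (ηa ηb αa αb x x' y y' : ℝ)
    (hx : x ∈ Set.Icc ((1 + ηa - |αa|) / 2) ((1 + ηa + |αa|) / 2))
    (hx' : x' ∈ Set.Icc ((1 + ηa - |αa|) / 2) ((1 + ηa + |αa|) / 2))
    (hy : y ∈ Set.Icc ((1 + ηb - |αb|) / 2) ((1 + ηb + |αb|) / 2))
    (hy' : y' ∈ Set.Icc ((1 + ηb - |αb|) / 2) ((1 + ηb + |αb|) / 2)) :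
    -|αa * αb| ≤ x*y - x*y' + x'*y + x'*y' - (1+ηb)*x' - (1+ηa)*y
        + ((1+ηa)*(1+ηb) - |αa*αb|)/2 ∧
    x*y - x*y' + x'*y + x'*y' - (1+ηb)*x' - (1+ηa)*y
        + ((1+ηa)*(1+ηb) - |αa*αb|)/2 ≤ 0 := by
  have h1 : |x - (1+ηa)/2| ≤ |αa|/2 := abs_le.2 ⟨by linarith [hx.1], by linarith [hx.2]⟩
  have h2 : |x' - (1+ηa)/2| ≤ |αa|/2 := abs_le.2 ⟨by linarith [hx'.1], by linarith [hx'.2]⟩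
  have h3 : |y - (1+ηb)/2| ≤ |αb|/2 := abs_le.2 ⟨by linarith [hy.1], by linarith [hy.2]⟩
  have h4 : |y' - (1+ηb)/2| ≤ |αb|/2 := abs_le.2 ⟨by linarith [hy'.1], by linarith [hy'.2]⟩
  have key := chsh_abs (|αa|/2) (|αb|/2) (x - (1+ηa)/2) (x' - (1+ηa)/2)
    (y - (1+ηb)/2) (y' - (1+ηb)/2) h1 h2 h3 h4
  obtain ⟨k1, k2⟩ := abs_le.mp key
  have habs : |αa * αb| = |αa| * |αb| := abs_mul αa αb
  constructor <;> nlinarith [k1, k2]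

lemma integ_of_abs_bound {Ω : Type*} [MeasurableSpace Ω] (μ : Measure Ω)
    [IsFiniteMeasure μ] (f : Ω → ℝ) (hf : Measurable f) (C : ℝ)
    (h : ∀ᵐ ω ∂μ, |f ω| ≤ C) : Integrable f μ := by
  refine (integrable_const C).mono' hf.aestronglyMeasurable ?_
  filter_upwards [h] with ω hω using by rwa [Real.norm_eq_abs]

/-- Generalized Clauser–Horne inequality for a local hidden-variable model:
the hidden variable ranges over a probability space `(Ω, μ)`; `f, f'` (resp. `g, g'`)
are the local response probabilities of party A (resp. B), almost surely constrained
between the extreme eigenvalues of the biased unsharp POVM elements.  The generalized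
CH functional built from the factorized joint probabilities lies in `[−|αa·αb|, 0]`. -/
theorem generalized_CH_lhv {Ω : Type*} [MeasurableSpace Ω] (μ : Measure Ω)
    [IsProbabilityMeasure μ] (ηa ηb αa αb : ℝ) (f f' g g' : Ω → ℝ)
    (hf : Measurable f) (hf' : Measurable f') (hg : Measurable g) (hg' : Measurable g')
    (hfb : ∀ᵐ ω ∂μ, f ω ∈ Set.Icc ((1 + ηa - |αa|) / 2) ((1 + ηa + |αa|) / 2))
    (hfb' : ∀ᵐ ω ∂μ, f' ω ∈ Set.Icc ((1 + ηa - |αa|) / 2) ((1 + ηa + |αa|) / 2))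
    (hgb : ∀ᵐ ω ∂μ, g ω ∈ Set.Icc ((1 + ηb - |αb|) / 2) ((1 + ηb + |αb|) / 2))
    (hgb' : ∀ᵐ ω ∂μ, g' ω ∈ Set.Icc ((1 + ηb - |αb|) / 2) ((1 + ηb + |αb|) / 2)) :
    -|αa * αb| ≤
      (∫ ω, f ω * g ω ∂μ) - (∫ ω, f ω * g' ω ∂μ) + (∫ ω, f' ω * g ω ∂μ)
        + (∫ ω, f' ω * g' ω ∂μ) - (1 + ηb) * (∫ ω, f' ω ∂μ) - (1 + ηa) * (∫ ω, g ω ∂μ)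
        + ((1 + ηa) * (1 + ηb) - |αa * αb|) / 2 ∧
    (∫ ω, f ω * g ω ∂μ) - (∫ ω, f ω * g' ω ∂μ) + (∫ ω, f' ω * g ω ∂μ)
        + (∫ ω, f' ω * g' ω ∂μ) - (1 + ηb) * (∫ ω, f' ω ∂μ) - (1 + ηa) * (∫ ω, g ω ∂μ)
        + ((1 + ηa) * (1 + ηb) - |αa * αb|) / 2 ≤ 0 := by
  set Ca := (|1 + ηa| + |αa|)/2 with hCa
  set Cb := (|1 + ηb| + |αb|)/2 with hCb
  have hfabs : ∀ᵐ ω ∂μ, |f ω| ≤ Ca := by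
    filter_upwards [hfb] with ω hω
    exact abs_le.2 ⟨by linarith [hω.1, neg_abs_le (1+ηa)], by linarith [hω.2, le_abs_self (1+ηa)]⟩
  have hfabs' : ∀ᵐ ω ∂μ, |f' ω| ≤ Ca := by
    filter_upwards [hfb'] with ω hω
    exact abs_le.2 ⟨by linarith [hω.1, neg_abs_le (1+ηa)], by linarith [hω.2, le_abs_self (1+ηa)]⟩
  have hgabs : ∀ᵐ ω ∂μ, |g ω| ≤ Cb := by
    filter_upwards [hgb] with ω hω
    exact abs_le.2 ⟨by linarith [hω.1, neg_abs_le (1+ηb)], by linarith [hω.2, le_abs_self (1+ηb)]⟩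
  have hgabs' : ∀ᵐ ω ∂μ, |g' ω| ≤ Cb := by
    filter_upwards [hgb'] with ω hω
    exact abs_le.2 ⟨by linarith [hω.1, neg_abs_le (1+ηb)], by linarith [hω.2, le_abs_self (1+ηb)]⟩
  have If' : Integrable f' μ := integ_of_abs_bound μ f' hf' Ca hfabs'
  have Ig : Integrable g μ := integ_of_abs_bound μ g hg Cb hgabs
  have prodbd : ∀ (u v : Ω → ℝ), (∀ᵐ ω ∂μ, |u ω| ≤ Ca) → (∀ᵐ ω ∂μ, |v ω| ≤ Cb) →
      (∀ᵐ ω ∂μ, |u ω * v ω| ≤ Ca * Cb) := by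
    intro u v hu hv
    filter_upwards [hu, hv] with ω h1 h2
    rw [abs_mul]
    exact mul_le_mul h1 h2 (abs_nonneg _) (le_trans (abs_nonneg _) h1)
  have Ifg : Integrable (fun ω => f ω * g ω) μ :=
    integ_of_abs_bound μ _ (hf.mul hg) _ (prodbd f g hfabs hgabs)
  have Ifg' : Integrable (fun ω => f ω * g' ω) μ :=
    integ_of_abs_bound μ _ (hf.mul hg') _ (prodbd f g' hfabs hgabs')
  have If'g : Integrable (fun ω => f' ω * g ω) μ :=
    integ_of_abs_bound μ _ (hf'.mul hg) _ (prodbd f' g hfabs' hgabs)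
  have If'g' : Integrable (fun ω => f' ω * g' ω) μ :=
    integ_of_abs_bound μ _ (hf'.mul hg') _ (prodbd f' g' hfabs' hgabs')
  have IH0 : Integrable (fun ω => f ω * g ω - f ω * g' ω + f' ω * g ω + f' ω * g' ω
      - (1+ηb) * f' ω - (1+ηa) * g ω) μ :=
    ((((Ifg.sub Ifg').add If'g).add If'g').sub (If'.const_mul (1+ηb))).sub (Ig.const_mul (1+ηa))
  have IH : Integrable (fun ω => f ω * g ω - f ω * g' ω + f' ω * g ω + f' ω * g' ω
      - (1+ηb) * f' ω - (1+ηa) * g ω + ((1+ηa)*(1+ηb) - |αa*αb|)/2) μ :=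
    IH0.add (integrable_const _)
  have e1 : ∫ ω, (f ω * g ω - f ω * g' ω) ∂μ
      = (∫ ω, f ω * g ω ∂μ) - ∫ ω, f ω * g' ω ∂μ := integral_sub Ifg Ifg'
  have e2 : ∫ ω, (f ω * g ω - f ω * g' ω + f' ω * g ω) ∂μ
      = (∫ ω, (f ω * g ω - f ω * g' ω) ∂μ) + ∫ ω, f' ω * g ω ∂μ :=
    integral_add (Ifg.sub Ifg') If'g
  have e3 : ∫ ω, (f ω * g ω - f ω * g' ω + f' ω * g ω + f' ω * g' ω) ∂μ
      = (∫ ω, (f ω * g ω - f ω * g' ω + f' ω * g ω) ∂μ) + ∫ ω, f' ω * g' ω ∂μ :=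
    integral_add ((Ifg.sub Ifg').add If'g) If'g'
  have e4 : ∫ ω, (f ω * g ω - f ω * g' ω + f' ω * g ω + f' ω * g' ω - (1+ηb) * f' ω) ∂μ
      = (∫ ω, (f ω * g ω - f ω * g' ω + f' ω * g ω + f' ω * g' ω) ∂μ)
        - ∫ ω, (1+ηb) * f' ω ∂μ :=
    integral_sub (((Ifg.sub Ifg').add If'g).add If'g') (If'.const_mul (1+ηb))
  have e5 : ∫ ω, (f ω * g ω - f ω * g' ω + f' ω * g ω + f' ω * g' ω - (1+ηb) * f' ω
        - (1+ηa) * g ω) ∂μ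
      = (∫ ω, (f ω * g ω - f ω * g' ω + f' ω * g ω + f' ω * g' ω - (1+ηb) * f' ω) ∂μ)
        - ∫ ω, (1+ηa) * g ω ∂μ :=
    integral_sub ((((Ifg.sub Ifg').add If'g).add If'g').sub (If'.const_mul (1+ηb)))
      (Ig.const_mul (1+ηa))
  have e6 : ∫ ω, (f ω * g ω - f ω * g' ω + f' ω * g ω + f' ω * g' ω - (1+ηb) * f' ω
        - (1+ηa) * g ω + ((1+ηa)*(1+ηb) - |αa*αb|)/2) ∂μ
      = (∫ ω, (f ω * g ω - f ω * g' ω + f' ω * g ω + f' ω * g' ω - (1+ηb) * f' ω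
        - (1+ηa) * g ω) ∂μ) + ∫ ω, ((1+ηa)*(1+ηb) - |αa*αb|)/2 ∂μ :=
    integral_add IH0 (integrable_const _)
  have e7 : ∫ ω, (1+ηb) * f' ω ∂μ = (1+ηb) * ∫ ω, f' ω ∂μ := MeasureTheory.integral_const_mul _ _
  have e8 : ∫ ω, (1+ηa) * g ω ∂μ = (1+ηa) * ∫ ω, g ω ∂μ := MeasureTheory.integral_const_mul _ _
  have e9 : ∫ _ω, ((1+ηa)*(1+ηb) - |αa*αb|)/2 ∂μ = ((1+ηa)*(1+ηb) - |αa*αb|)/2 := by simp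
  have hsplit : ∫ ω, (f ω * g ω - f ω * g' ω + f' ω * g ω + f' ω * g' ω
      - (1+ηb) * f' ω - (1+ηa) * g ω + ((1+ηa)*(1+ηb) - |αa*αb|)/2) ∂μ
      = (∫ ω, f ω * g ω ∂μ) - (∫ ω, f ω * g' ω ∂μ) + (∫ ω, f' ω * g ω ∂μ)
        + (∫ ω, f' ω * g' ω ∂μ) - (1 + ηb) * (∫ ω, f' ω ∂μ) - (1 + ηa) * (∫ ω, g ω ∂μ)
        + ((1 + ηa) * (1 + ηb) - |αa * αb|) / 2 := by
    rw [e6, e5, e4, e3, e2, e1, e7, e8, e9]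
  have hptL : ∀ᵐ ω ∂μ, -|αa*αb| ≤ f ω * g ω - f ω * g' ω + f' ω * g ω + f' ω * g' ω
      - (1+ηb) * f' ω - (1+ηa) * g ω + ((1+ηa)*(1+ηb) - |αa*αb|)/2 := by
    filter_upwards [hfb, hfb', hgb, hgb'] with ω h1 h2 h3 h4
    exact (ch_pt ηa ηb αa αb _ _ _ _ h1 h2 h3 h4).1
  have hptU : ∀ᵐ ω ∂μ, f ω * g ω - f ω * g' ω + f' ω * g ω + f' ω * g' ω
      - (1+ηb) * f' ω - (1+ηa) * g ω + ((1+ηa)*(1+ηb) - |αa*αb|)/2 ≤ 0 := by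
    filter_upwards [hfb, hfb', hgb, hgb'] with ω h1 h2 h3 h4
    exact (ch_pt ηa ηb αa αb _ _ _ _ h1 h2 h3 h4).2
  constructor
  · rw [← hsplit]
    have := integral_mono_ae (integrable_const (-|αa*αb|)) IH hptL
    simpa using this
  · rw [← hsplit]
    have := integral_mono_ae IH (integrable_const (0:ℝ)) hptU
    simpa using this
end

section
/- Let X be a real random variable on a probability space taking values almost surely in a bounded interval [A, B] with A ≤ B, and let m = E[X]. Then the third central moment satisfies |E[(X − m)³]| ≤ (B − A)³/8. -/
open MeasureTheory

lemma third_cm_aux {Ω : Type*} [MeasurableSpace Ω] (μ : Measure Ω)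
    [IsProbabilityMeasure μ] (u : Ω → ℝ) (hu : Measurable u) (a b : ℝ)
    (ha : 0 ≤ a) (hb : 0 ≤ b)
    (hmem : ∀ᵐ ω ∂μ, u ω ∈ Set.Icc (-a) b)
    (hmean : ∫ ω, u ω ∂μ = 0) :
    |∫ ω, (u ω) ^ 3 ∂μ| ≤ (a + b) ^ 3 / 8 := by
  have hui : ∀ n : ℕ, Integrable (fun ω => (u ω) ^ n) μ := by
    intro n
    refine ⟨(hu.pow_const n).aestronglyMeasurable, ?_⟩
    apply HasFiniteIntegral.of_bounded (C := (max a b) ^ n)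
    filter_upwards [hmem] with ω h
    rw [Real.norm_eq_abs, abs_pow]
    refine pow_le_pow_left₀ (abs_nonneg _) ?_ n
    rw [abs_le]
    exact ⟨le_trans (neg_le_neg (le_max_left a b)) h.1, le_trans h.2 (le_max_right a b)⟩
  have hu1 : Integrable u μ := by simpa using hui 1
  set S := ∫ ω, (u ω) ^ 2 ∂μ with hS
  set T := ∫ ω, (u ω) ^ 3 ∂μ with hT
  have key3 : ∀ t p q c : ℝ,
      ∫ ω, (t * (u ω) ^ 3 + p * (u ω) ^ 2 + q * (u ω) + c) ∂μ = t * T + p * S + c := by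
    intro t p q c
    have i3 : Integrable (fun ω => t * (u ω) ^ 3) μ := (hui 3).const_mul t
    have i2 : Integrable (fun ω => p * (u ω) ^ 2) μ := (hui 2).const_mul p
    have i1 : Integrable (fun ω => q * (u ω)) μ := hu1.const_mul q
    have i32 : Integrable (fun ω => t * (u ω) ^ 3 + p * (u ω) ^ 2) μ := i3.add i2
    have i321 : Integrable (fun ω => t * (u ω) ^ 3 + p * (u ω) ^ 2 + q * (u ω)) μ := i32.add i1
    rw [integral_add i321 (integrable_const c), integral_add i32 i1, integral_add i3 i2,
        integral_const_mul, integral_const_mul, integral_const_mul, hmean, integral_const]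
    simp [hS, hT]
  have hS0 : 0 ≤ S := integral_nonneg fun ω => sq_nonneg _
  have hSle : S ≤ a * b := by
    have h0 : 0 ≤ ∫ ω, ((b - u ω) * (u ω + a)) ∂μ := by
      refine integral_nonneg_of_ae ?_
      filter_upwards [hmem] with ω h
      exact mul_nonneg (by linarith [h.2]) (by linarith [h.1])
    have heq : (fun ω => (b - u ω) * (u ω + a))
        = fun ω => (-1) * (u ω) ^ 3 * 0 + (-1) * (u ω) ^ 2 + (b - a) * (u ω) + a * b := by
      funext ω; ring
    rw [show (fun ω => (b - u ω) * (u ω + a))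
        = fun ω => 0 * (u ω) ^ 3 + (-1) * (u ω) ^ 2 + (b - a) * (u ω) + a * b by
          funext ω; ring, key3] at h0
    linarith
  have hub : ∀ r : ℝ, T ≤ (b - 2 * r) * S + b * r ^ 2 := by
    intro r
    have h0 : 0 ≤ ∫ ω, ((b - u ω) * (u ω + r) ^ 2) ∂μ := by
      refine integral_nonneg_of_ae ?_
      filter_upwards [hmem] with ω h
      exact mul_nonneg (by linarith [h.2]) (sq_nonneg _)
    rw [show (fun ω => (b - u ω) * (u ω + r) ^ 2)
        = fun ω => (-1) * (u ω) ^ 3 + (b - 2 * r) * (u ω) ^ 2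
            + (2 * b * r - r ^ 2) * (u ω) + b * r ^ 2 by funext ω; ring, key3] at h0
    linarith
  have hlb : ∀ r : ℝ, -((a - 2 * r) * S + a * r ^ 2) ≤ T := by
    intro r
    have h0 : 0 ≤ ∫ ω, ((u ω + a) * (u ω - r) ^ 2) ∂μ := by
      refine integral_nonneg_of_ae ?_
      filter_upwards [hmem] with ω h
      exact mul_nonneg (by linarith [h.1]) (sq_nonneg _)
    rw [show (fun ω => (u ω + a) * (u ω - r) ^ 2)
        = fun ω => 1 * (u ω) ^ 3 + (a - 2 * r) * (u ω) ^ 2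
            + (r ^ 2 - 2 * a * r) * (u ω) + a * r ^ 2 by funext ω; ring, key3] at h0
    linarith
  rw [abs_le]
  constructor
  · -- lower bound
    rcases le_or_gt b (a / 2) with hba | hba
    · have h := hlb b
      have h2 : (a - 2 * b) * S ≤ (a - 2 * b) * (a * b) :=
        mul_le_mul_of_nonneg_left hSle (by linarith)
      nlinarith [mul_nonneg ha (sq_nonneg (a - 5 * b / 2)),
        mul_nonneg (mul_nonneg hb hb) ha, pow_nonneg hb 3]
    · have h := hlb (a / 2)
      nlinarith [mul_nonneg (mul_nonneg hb hb) hb, mul_nonneg (mul_nonneg ha hb) hb,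
        mul_nonneg (mul_nonneg ha ha) hb, hS0]
  · -- upper bound
    rcases le_or_gt a (b / 2) with hab | hab
    · have h := hub a
      have h2 : (b - 2 * a) * S ≤ (b - 2 * a) * (a * b) :=
        mul_le_mul_of_nonneg_left hSle (by linarith)
      nlinarith [mul_nonneg hb (sq_nonneg (b - 5 * a / 2)),
        mul_nonneg (mul_nonneg ha ha) hb, pow_nonneg ha 3]
    · have h := hub (b / 2)
      nlinarith [mul_nonneg (mul_nonneg ha ha) ha, mul_nonneg (mul_nonneg ha hb) hb, mul_nonneg (mul_nonneg ha ha) hb, hS0]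

/-- For a real random variable supported a.s. in `[A, B]`, the third central
moment (skewness, third cumulant) satisfies `|E[(X − m)³]| ≤ (B − A)³ / 8`. -/
theorem third_central_moment_bound {Ω : Type*} [MeasurableSpace Ω] (μ : Measure Ω)
    [IsProbabilityMeasure μ] (X : Ω → ℝ) (hX : Measurable X) (A B : ℝ) (hAB : A ≤ B)
    (hbound : ∀ᵐ ω ∂μ, X ω ∈ Set.Icc A B) :
    |∫ ω, (X ω - ∫ ω', X ω' ∂μ) ^ 3 ∂μ| ≤ (B - A) ^ 3 / 8 := by
  have hXi : Integrable X μ := by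
    refine ⟨hX.aestronglyMeasurable, ?_⟩
    apply HasFiniteIntegral.of_bounded (C := max |A| |B|)
    filter_upwards [hbound] with ω h
    rw [Real.norm_eq_abs]
    exact abs_le_max_abs_abs h.1 h.2
  set m := ∫ ω', X ω' ∂μ with hm
  have hmA : A ≤ m := by
    have := integral_mono_ae (integrable_const A) hXi
      (by filter_upwards [hbound] with ω h using h.1)
    simpa using this
  have hmB : m ≤ B := by
    have := integral_mono_ae hXi (integrable_const B)
      (by filter_upwards [hbound] with ω h using h.2)
    simpa using this
  have hmean : ∫ ω, (X ω - m) ∂μ = 0 := by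
    rw [integral_sub hXi (integrable_const m), integral_const]
    simp [hm]
  have := third_cm_aux μ (fun ω => X ω - m) (hX.sub measurable_const) (m - A) (B - m)
    (by linarith) (by linarith)
    (by filter_upwards [hbound] with ω h;
        exact ⟨by simp; linarith [h.1], by linarith [h.2]⟩) hmean
  convert this using 2
  ring
end

section
/- Let X be a real random variable on a probability space taking values almost surely in a bounded interval [A, B] with A ≤ B, and let m = E[X]. Then the fourth central moment satisfies E[(X − m)⁴] ≤ (B − A)⁴/12. -/
open MeasureTheory

lemma fcm_ptwise (a b y : ℝ) (h1 : -a ≤ y) (h2 : y ≤ b) :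
    y ^ 4 ≤ b ^ 4 + (a ^ 2 + b ^ 2) * (b - a) * (y - b) := by
  have hq : (0:ℝ) ≤ y ^ 2 + (b - a) * y + (a ^ 2 - a * b + b ^ 2) := by
    nlinarith [sq_nonneg (2 * y + b - a), sq_nonneg (a - b), sq_nonneg a, sq_nonneg b]
  nlinarith [mul_nonneg (mul_nonneg (sub_nonneg.2 h2) (by linarith : (0:ℝ) ≤ y + a)) hq]

lemma fcm_final (a b : ℝ) : a * b * (a ^ 2 - a * b + b ^ 2) ≤ (a + b) ^ 4 / 12 := by
  nlinarith [sq_nonneg (a ^ 2 - 4 * a * b + b ^ 2)]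

/-- For a real random variable supported a.s. in `[A, B]`, the fourth central
moment satisfies `E[(X − m)⁴] ≤ (B − A)⁴ / 12`. -/
theorem fourth_central_moment_bound {Ω : Type*} [MeasurableSpace Ω] (μ : Measure Ω)
    [IsProbabilityMeasure μ] (X : Ω → ℝ) (hX : Measurable X) (A B : ℝ) (hAB : A ≤ B)
    (hbound : ∀ᵐ ω ∂μ, X ω ∈ Set.Icc A B) :
    (∫ ω, (X ω - ∫ ω', X ω' ∂μ) ^ 4 ∂μ) ≤ (B - A) ^ 4 / 12 := by
  set m := ∫ ω', X ω' ∂μ with hm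
  have hXint : Integrable X μ := by
    refine (integrable_const (max |A| |B|)).mono' hX.aestronglyMeasurable ?_
    filter_upwards [hbound] with ω hω
    rw [Real.norm_eq_abs, abs_le]
    constructor
    · have : -(max |A| |B|) ≤ -|A| := by simp [le_max_left]
      have h2 : -|A| ≤ A := neg_abs_le A
      linarith [hω.1]
    · have : |B| ≤ max |A| |B| := le_max_right _ _
      have h2 : B ≤ |B| := le_abs_self B
      linarith [hω.2]
  have hmB : m ≤ B := by
    rw [hm]
    calc ∫ ω', X ω' ∂μ ≤ ∫ _ω', B ∂μ :=
          integral_mono_ae hXint (integrable_const _) (hbound.mono fun ω h => h.2)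
      _ = B := by simp
  have hAm : A ≤ m := by
    rw [hm]
    calc A = ∫ _ω', A ∂μ := by simp
      _ ≤ ∫ ω', X ω' ∂μ :=
          integral_mono_ae (integrable_const _) hXint (hbound.mono fun ω h => h.1)
  set a := m - A with ha
  set b := B - m with hb
  set c := (a ^ 2 + b ^ 2) * (b - a) with hc
  have hYint : Integrable (fun ω => (X ω - m) ^ 4) μ := by
    refine (integrable_const ((B - A) ^ 4)).mono'
      (((hX.sub measurable_const).pow_const 4).aestronglyMeasurable) ?_
    filter_upwards [hbound] with ω hω
    rw [Real.norm_eq_abs, abs_pow]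
    have h1 : |X ω - m| ≤ B - A := by
      rw [abs_le]; exact ⟨by linarith [hω.1], by linarith [hω.2]⟩
    exact pow_le_pow_left₀ (abs_nonneg _) h1 4
  have hgint : Integrable (fun ω => (b ^ 4 - c * (m + b)) + c * X ω) μ :=
    (integrable_const _).add (hXint.const_mul c)
  have hle : (∫ ω, (X ω - m) ^ 4 ∂μ) ≤ ∫ ω, ((b ^ 4 - c * (m + b)) + c * X ω) ∂μ := by
    refine integral_mono_ae hYint hgint ?_
    filter_upwards [hbound] with ω hω
    have := fcm_ptwise a b (X ω - m) (by linarith [hω.1]) (by linarith [hω.2])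
    calc (X ω - m) ^ 4 ≤ b ^ 4 + (a ^ 2 + b ^ 2) * (b - a) * ((X ω - m) - b) := this
      _ = (b ^ 4 - c * (m + b)) + c * X ω := by rw [hc]; ring
  have hgval : (∫ ω, ((b ^ 4 - c * (m + b)) + c * X ω) ∂μ) = b ^ 4 - c * b := by
    rw [integral_add (integrable_const _) (hXint.const_mul c), integral_const,
      integral_const_mul, ← hm]
    simp; ring
  have key : (∫ ω, (X ω - m) ^ 4 ∂μ) ≤ a * b * (a ^ 2 - a * b + b ^ 2) := by
    rw [hgval] at hle
    calc (∫ ω, (X ω - m) ^ 4 ∂μ) ≤ b ^ 4 - c * b := hle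
      _ = a * b * (a ^ 2 - a * b + b ^ 2) := by rw [hc]; ring
  calc (∫ ω, (X ω - m) ^ 4 ∂μ) ≤ a * b * (a ^ 2 - a * b + b ^ 2) := key
    _ ≤ (a + b) ^ 4 / 12 := fcm_final a b
    _ = (B - A) ^ 4 / 12 := by rw [ha, hb]; ring_nf
end

section
/- Let (Ω, μ) be a probability space, η_a, η_b, α_a, α_b real numbers, and f, f', g, g' : Ω → ℝ measurable functions with f(ω), f'(ω) ∈ [(1+η_a−|α_a|)/2, (1+η_a+|α_a|)/2] and g(ω), g'(ω) ∈ [(1+η_b−|α_b|)/2, (1+η_b+|α_b|)/2] for μ-almost every ω. Define the random variable S = f·g − f·g' + f'·g + f'·g' − (1+η_b)·f' − (1+η_a)·g + ((1+η_a)(1+η_b) − |α_a·α_b|)/2 and let m = ∫S dμ. Then the third cumulant of S satisfies |∫(S − m)³ dμ| ≤ |α_a·α_b|³/8. -/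
open MeasureTheory

/-- Upper bound for the generalized CH expression. -/
lemma ch_upper (La Lb A B x x' y y' : ℝ) (hA : 0 ≤ A) (hB : 0 ≤ B)
    (hx1 : La ≤ x) (hx2 : x ≤ La + A) (hx'1 : La ≤ x') (hx'2 : x' ≤ La + A)
    (hy1 : Lb ≤ y) (hy2 : y ≤ Lb + B) (hy'1 : Lb ≤ y') (hy'2 : y' ≤ Lb + B) :
    x*y - x*y' + x'*y + x'*y' - (2*Lb+B)*x' - (2*La+A)*y
      + ((2*La+A)*(2*Lb+B) - A*B)/2 ≤ 0 := by
  rcases le_total (y + y') (2*Lb + B) with h | h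
  · nlinarith [mul_nonneg (by linarith : (0:ℝ) ≤ y - Lb) (by linarith : (0:ℝ) ≤ La + A - x),
               mul_nonneg (by linarith : (0:ℝ) ≤ x - La) (by linarith : (0:ℝ) ≤ y' - Lb),
               mul_nonneg (by linarith : (0:ℝ) ≤ x' - La)
                 (by linarith : (0:ℝ) ≤ 2*Lb + B - y - y')]
  · nlinarith [mul_nonneg (by linarith : (0:ℝ) ≤ La + A - x) (by linarith : (0:ℝ) ≤ Lb + B - y'),
               mul_nonneg (by linarith : (0:ℝ) ≤ x - La) (by linarith : (0:ℝ) ≤ Lb + B - y),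
               mul_nonneg (by linarith : (0:ℝ) ≤ La + A - x')
                 (by linarith : (0:ℝ) ≤ y + y' - 2*Lb - B)]

/-- Lower bound for the generalized CH expression. -/
lemma ch_lower (La Lb A B x x' y y' : ℝ) (hA : 0 ≤ A) (hB : 0 ≤ B)
    (hx1 : La ≤ x) (hx2 : x ≤ La + A) (hx'1 : La ≤ x') (hx'2 : x' ≤ La + A)
    (hy1 : Lb ≤ y) (hy2 : y ≤ Lb + B) (hy'1 : Lb ≤ y') (hy'2 : y' ≤ Lb + B) :
    -(A*B) ≤ x*y - x*y' + x'*y + x'*y' - (2*Lb+B)*x' - (2*La+A)*y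
      + ((2*La+A)*(2*Lb+B) - A*B)/2 := by
  have h := ch_upper La Lb A B x x' (2*Lb+B-y) (2*Lb+B-y') hA hB
    hx1 hx2 hx'1 hx'2 (by linarith) (by linarith) (by linarith) (by linarith)
  nlinarith [h]

/-- Algebraic core of the third central moment bound. -/
lemma cube_bound (a b V K : ℝ) (ha : 0 ≤ a) (hb : 0 ≤ b) (hV0 : 0 ≤ V) (hVab : V ≤ a*b)
    (h1 : K ≤ b*V) (h2 : K ≤ (b-2*a)*V + a^2*b) : K ≤ (a+b)^3/8 := by
  rcases le_or_gt b (2*a) with h | h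
  · by_cases ha0 : a = 0
    · subst ha0
      have hb0 : b = 0 := le_antisymm (by linarith) hb
      subst hb0
      nlinarith [h1, hV0]
    · have ha' : 0 < a := lt_of_le_of_ne ha (Ne.symm ha0)
      have key : 2*a*K ≤ a^2*b^2 := by
        nlinarith [mul_nonneg (by linarith : (0:ℝ) ≤ 2*a-b) (by linarith : (0:ℝ) ≤ b*V - K),
                   mul_nonneg hb (by linarith : (0:ℝ) ≤ (b-2*a)*V + a^2*b - K)]
      nlinarith [key, ha', mul_nonneg (mul_nonneg ha hb) (sq_nonneg (a-b)),
                 sq_nonneg (a*b), sq_nonneg (a^2),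
                 mul_nonneg (mul_nonneg (mul_nonneg ha ha) ha) hb]
  · have hK : K ≤ a*b^2 - a^2*b := by
      nlinarith [h2, mul_nonneg (by linarith : (0:ℝ) ≤ b-2*a) (by linarith : (0:ℝ) ≤ a*b - V)]
    nlinarith [hK, mul_nonneg hb (sq_nonneg (2*b-5*a)),
               mul_nonneg (mul_nonneg ha ha) hb,
               mul_nonneg (mul_nonneg ha ha) ha]

/-- Third central moment bound for a centered random variable in `[-a, b]`. -/
lemma third_moment {Ω : Type*} [MeasurableSpace Ω] (μ : Measure Ω) [IsProbabilityMeasure μ]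
    (Y : Ω → ℝ) (hY : Measurable Y) (a b : ℝ) (ha : 0 ≤ a) (hb : 0 ≤ b)
    (hbd : ∀ᵐ ω ∂μ, -a ≤ Y ω ∧ Y ω ≤ b) (hmean : ∫ ω, Y ω ∂μ = 0) :
    |∫ ω, (Y ω)^3 ∂μ| ≤ (a+b)^3/8 := by
  have hMn : ∀ n : ℕ, Integrable (fun ω => Y ω ^ n) μ := by
    intro n
    refine Integrable.mono' (integrable_const ((max a b)^n))
      ((hY.pow_const n).aestronglyMeasurable) ?_
    filter_upwards [hbd] with ω hω
    have h1 : |Y ω| ≤ max a b := abs_le.mpr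
      ⟨le_trans (neg_le_neg (le_max_left a b)) hω.1, hω.2.trans (le_max_right a b)⟩
    rw [Real.norm_eq_abs, abs_pow]
    exact pow_le_pow_left₀ (abs_nonneg _) h1 n
  have hY1 : Integrable Y μ := by simpa using hMn 1
  set V := ∫ ω, (Y ω)^2 ∂μ with hV
  set K := ∫ ω, (Y ω)^3 ∂μ with hK
  have key : ∀ c0 c1 c2 c3 : ℝ,
      ∫ ω, (c0 + c1 * Y ω + c2 * (Y ω)^2 + c3 * (Y ω)^3) ∂μ = c0 + c2 * V + c3 * K := by
    intro c0 c1 c2 c3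
    have i1 : Integrable (fun ω => c1 * Y ω) μ := hY1.const_mul c1
    have i2 : Integrable (fun ω => c2 * (Y ω)^2) μ := (hMn 2).const_mul c2
    have i3 : Integrable (fun ω => c3 * (Y ω)^3) μ := (hMn 3).const_mul c3
    have j1 : Integrable (fun ω => c0 + c1 * Y ω) μ := (integrable_const c0).add i1
    have j2 : Integrable (fun ω => c0 + c1 * Y ω + c2 * (Y ω)^2) μ := j1.add i2
    rw [integral_add j2 i3,
        integral_add j1 i2,
        integral_add (integrable_const c0) i1,
        integral_const_mul, integral_const_mul, integral_const_mul,
        hmean, integral_const]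
    simp [measure_univ, hV, hK]
  have fact : ∀ c0 c1 c2 c3 : ℝ,
      (∀ᵐ ω ∂μ, 0 ≤ c0 + c1 * Y ω + c2 * (Y ω)^2 + c3 * (Y ω)^3) →
      0 ≤ c0 + c2 * V + c3 * K := by
    intro c0 c1 c2 c3 hh
    rw [← key c0 c1 c2 c3]
    exact integral_nonneg_of_ae hh
  have E0 : 0 ≤ V := by
    have := fact 0 0 1 0 (Filter.Eventually.of_forall fun ω => by nlinarith [sq_nonneg (Y ω)])
    linarith
  have E1 : K ≤ b*V := by
    have := fact 0 0 b (-1) (hbd.mono fun ω hω => by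
      nlinarith [mul_nonneg (sq_nonneg (Y ω)) (by linarith [hω.2] : (0:ℝ) ≤ b - Y ω)])
    linarith
  have E2 : -(a*V) ≤ K := by
    have := fact 0 0 a 1 (hbd.mono fun ω hω => by
      nlinarith [mul_nonneg (sq_nonneg (Y ω)) (by linarith [hω.1] : (0:ℝ) ≤ Y ω + a)])
    linarith
  have E3 : V ≤ a*b := by
    have := fact (a*b) (b-a) (-1) 0 (hbd.mono fun ω hω => by
      nlinarith [mul_nonneg (by linarith [hω.1] : (0:ℝ) ≤ Y ω + a)
        (by linarith [hω.2] : (0:ℝ) ≤ b - Y ω)])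
    linarith
  have E4 : K ≤ (b-2*a)*V + a^2*b := by
    have := fact (a^2*b) (2*a*b-a^2) (b-2*a) (-1) (hbd.mono fun ω hω => by
      nlinarith [mul_nonneg (sq_nonneg (Y ω + a)) (by linarith [hω.2] : (0:ℝ) ≤ b - Y ω)])
    linarith
  have E5 : (2*b-a)*V - a*b^2 ≤ K := by
    have := fact (a*b^2) (b^2-2*a*b) (a-2*b) 1 (hbd.mono fun ω hω => by
      nlinarith [mul_nonneg (sq_nonneg (b - Y ω)) (by linarith [hω.1] : (0:ℝ) ≤ Y ω + a)])
    linarith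
  rw [abs_le]
  constructor
  · have := cube_bound b a V (-K) hb ha E0 (by linarith [E3])
      (by linarith [E2]) (by nlinarith [E5])
    nlinarith [this]
  · exact cube_bound a b V K ha hb E0 E3 E1 E4

/-- Third-cumulant (skewness) constraint on the generalized Clauser–Horne functional
in a local hidden-variable model: with `S` the hidden-variable realization of the CH
functional built from local response probabilities `f, f', g, g'` constrained between
the extreme POVM eigenvalues, `|κ₃(S)| = |E[(S − m)³]| ≤ |αa·αb|³ / 8`. -/
theorem CH_third_cumulant_lhv_bound {Ω : Type*} [MeasurableSpace Ω] (μ : Measure Ω)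
    [IsProbabilityMeasure μ] (ηa ηb αa αb : ℝ) (f f' g g' : Ω → ℝ)
    (hf : Measurable f) (hf' : Measurable f') (hg : Measurable g) (hg' : Measurable g')
    (hfb : ∀ᵐ ω ∂μ, f ω ∈ Set.Icc ((1 + ηa - |αa|) / 2) ((1 + ηa + |αa|) / 2))
    (hfb' : ∀ᵐ ω ∂μ, f' ω ∈ Set.Icc ((1 + ηa - |αa|) / 2) ((1 + ηa + |αa|) / 2))
    (hgb : ∀ᵐ ω ∂μ, g ω ∈ Set.Icc ((1 + ηb - |αb|) / 2) ((1 + ηb + |αb|) / 2))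
    (hgb' : ∀ᵐ ω ∂μ, g' ω ∈ Set.Icc ((1 + ηb - |αb|) / 2) ((1 + ηb + |αb|) / 2))
    (S : Ω → ℝ)
    (hS : ∀ ω, S ω =
      f ω * g ω - f ω * g' ω + f' ω * g ω + f' ω * g' ω
        - (1 + ηb) * f' ω - (1 + ηa) * g ω
        + ((1 + ηa) * (1 + ηb) - |αa * αb|) / 2) :
    |∫ ω, (S ω - ∫ ω', S ω' ∂μ) ^ 3 ∂μ| ≤ |αa * αb| ^ 3 / 8 := by
  have hA : (0:ℝ) ≤ |αa| := abs_nonneg _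
  have hB : (0:ℝ) ≤ |αb| := abs_nonneg _
  have hSmeas : Measurable S := by
    have hSe : S = fun ω =>
      f ω * g ω - f ω * g' ω + f' ω * g ω + f' ω * g' ω
        - (1 + ηb) * f' ω - (1 + ηa) * g ω
        + ((1 + ηa) * (1 + ηb) - |αa * αb|) / 2 := funext hS
    rw [hSe]
    exact ((((((hf.mul hg).sub (hf.mul hg')).add (hf'.mul hg)).add
      (hf'.mul hg')).sub (hf'.const_mul (1 + ηb))).sub
      (hg.const_mul (1 + ηa))).add_const _
  have hbdS : ∀ᵐ ω ∂μ, -(|αa| * |αb|) ≤ S ω ∧ S ω ≤ 0 := by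
    filter_upwards [hfb, hfb', hgb, hgb'] with ω h1 h2 h3 h4
    obtain ⟨h1a, h1b⟩ := h1
    obtain ⟨h2a, h2b⟩ := h2
    obtain ⟨h3a, h3b⟩ := h3
    obtain ⟨h4a, h4b⟩ := h4
    rw [hS ω]
    set La := (1 + ηa - |αa|) / 2 with hLadef
    set Lb := (1 + ηb - |αb|) / 2 with hLbdef
    have ea : (1 + ηa) = 2*La + |αa| := by rw [hLadef]; ring
    have eb : (1 + ηb) = 2*Lb + |αb| := by rw [hLbdef]; ring
    have hxa : (1 + ηa + |αa|)/2 = La + |αa| := by rw [hLadef]; ring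
    have hxb : (1 + ηb + |αb|)/2 = Lb + |αb| := by rw [hLbdef]; ring
    rw [hxa] at h1b h2b
    rw [hxb] at h3b h4b
    rw [abs_mul, ea, eb]
    constructor
    · exact ch_lower La Lb |αa| |αb| (f ω) (f' ω) (g ω) (g' ω) hA hB
        h1a h1b h2a h2b h3a h3b h4a h4b
    · exact ch_upper La Lb |αa| |αb| (f ω) (f' ω) (g ω) (g' ω) hA hB
        h1a h1b h2a h2b h3a h3b h4a h4b
  have hSint : Integrable S μ := by
    refine Integrable.mono' (integrable_const (|αa| * |αb|)) hSmeas.aestronglyMeasurable ?_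
    filter_upwards [hbdS] with ω hω
    rw [Real.norm_eq_abs, abs_le]
    exact ⟨hω.1, hω.2.trans (mul_nonneg hA hB)⟩
  set m := ∫ ω', S ω' ∂μ with hm
  have hm1 : -(|αa| * |αb|) ≤ m := by
    have := integral_mono_ae (integrable_const (-(|αa| * |αb|))) hSint
      (hbdS.mono fun ω h => h.1)
    simpa [measure_univ] using this
  have hm2 : m ≤ 0 := by
    have := integral_mono_ae hSint (integrable_const (0:ℝ)) (hbdS.mono fun ω h => h.2)
    simpa [measure_univ] using this
  have hmean : ∫ ω, (S ω - m) ∂μ = 0 := by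
    rw [integral_sub hSint (integrable_const m), integral_const]
    simp [measure_univ, ← hm]
  have hfin := third_moment μ (fun ω => S ω - m) (hSmeas.sub measurable_const)
    (m + |αa| * |αb|) (-m) (by linarith) (by linarith)
    (hbdS.mono fun ω h => ⟨by linarith [h.1], by linarith [h.2]⟩)
    hmean
  have hab : (m + |αa| * |αb| + -m) = |αa * αb| := by rw [abs_mul]; ring
  rw [hab] at hfin
  simpa using hfin
end

section
/- Let α ∈ ℝ and let X be a real random variable on a probability space taking values almost surely in the interval [−α², 0], with mean m = E[X]. Then the fourth central moment satisfies E[(X − m)⁴] ≤ α⁸/12. -/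
open MeasureTheory

lemma CH_chord_ineq (c x m : ℝ) (hc : 0 ≤ c) (h1 : -c ≤ x) (h2 : x ≤ 0) :
    c * (x - m)^4 ≤ (-x) * (-c - m)^4 + (x + c) * m^4 := by
  have hnx : 0 ≤ -x := by linarith
  have hxc : 0 ≤ x + c := by linarith
  have h := mul_nonneg (mul_nonneg hc hnx) hxc
  nlinarith [mul_nonneg h (sq_nonneg (2*x - 4*m - c)), mul_nonneg h (sq_nonneg (c + 2*m)),
    mul_nonneg h (sq_nonneg (c + m)), mul_nonneg h (sq_nonneg m)]

lemma CH_poly_max (c m : ℝ) (hc : 0 ≤ c) (h1 : -c ≤ m) (h2 : m ≤ 0) :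
    (-m) * (-c - m)^4 + (m + c) * m^4 ≤ c^5 / 12 := by
  nlinarith [mul_nonneg (neg_nonneg.mpr h2) (by linarith : (0:ℝ) ≤ m + c),
    sq_nonneg (c^2 + 6*m*(m+c)), sq_nonneg (2*m + c),
    mul_nonneg (mul_nonneg (neg_nonneg.mpr h2) (by linarith : (0:ℝ) ≤ m + c))
      (sq_nonneg (2*m+c)), sq_nonneg c]

/-- Fourth central moment bound for the generalized Clauser–Horne functional under
local realism: if `X` takes values a.s. in `[−α², 0]`, then `E[(X − m)⁴] ≤ α⁸/12`. -/
theorem CH_fourth_central_moment_bound {Ω : Type*} [MeasurableSpace Ω] (μ : Measure Ω)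
    [IsProbabilityMeasure μ] (α : ℝ) (X : Ω → ℝ) (hX : Measurable X)
    (hbound : ∀ᵐ ω ∂μ, X ω ∈ Set.Icc (-α ^ 2) 0) :
    (∫ ω, (X ω - ∫ ω', X ω' ∂μ) ^ 4 ∂μ) ≤ α ^ 8 / 12 := by
  set c : ℝ := α ^ 2 with hc_def
  have hc : 0 ≤ c := sq_nonneg α
  -- integrability of X
  have hXint : Integrable X μ := by
    refine Integrable.mono' (integrable_const c) hX.aestronglyMeasurable ?_
    filter_upwards [hbound] with ω h
    rw [Real.norm_eq_abs]
    exact abs_le.mpr ⟨h.1, h.2.trans hc⟩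
  set m : ℝ := ∫ ω', X ω' ∂μ with hm_def
  -- bounds on the mean
  have hm1 : -c ≤ m := by
    have : ∫ _ω, (-c : ℝ) ∂μ ≤ ∫ ω, X ω ∂μ := by
      refine integral_mono_ae (integrable_const _) hXint ?_
      filter_upwards [hbound] with ω h using h.1
    simpa using this
  have hm2 : m ≤ 0 := by
    have : ∫ ω, X ω ∂μ ≤ ∫ _ω, (0 : ℝ) ∂μ := by
      refine integral_mono_ae hXint (integrable_const _) ?_
      filter_upwards [hbound] with ω h using h.2
    simpa using this
  -- integrability of the central fourth power
  have h4int : Integrable (fun ω => (X ω - m) ^ 4) μ := by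
    refine Integrable.mono' (integrable_const (c ^ 4)) ?_ ?_
    · exact (((hX.sub measurable_const).pow measurable_const)).aestronglyMeasurable
    · filter_upwards [hbound] with ω h
      rw [Real.norm_eq_abs, abs_pow]
      have habs : |X ω - m| ≤ c := abs_le.mpr ⟨by linarith [h.1], by linarith [h.2]⟩
      exact pow_le_pow_left₀ (abs_nonneg _) habs 4
  -- key integral inequality from the chord bound
  have hkey : c * ∫ ω, (X ω - m) ^ 4 ∂μ ≤ (-m) * (-c - m)^4 + (m + c) * m^4 := by
    have e1 : Integrable (fun ω => -X ω * (-c - m)^4) μ := by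
      exact hXint.neg.mul_const _
    have e2 : Integrable (fun ω => (X ω + c) * m^4) μ := by
      exact (hXint.add (integrable_const c)).mul_const _
    have hRint : Integrable (fun ω => (-X ω) * (-c - m)^4 + (X ω + c) * m^4) μ := e1.add e2
    have hmono : ∫ ω, c * (X ω - m) ^ 4 ∂μ ≤
        ∫ ω, (-X ω) * (-c - m)^4 + (X ω + c) * m^4 ∂μ := by
      refine integral_mono_ae (h4int.const_mul c) hRint ?_
      filter_upwards [hbound] with ω h
      exact CH_chord_ineq c (X ω) m hc h.1 h.2
    have hL : ∫ ω, c * (X ω - m) ^ 4 ∂μ = c * ∫ ω, (X ω - m) ^ 4 ∂μ :=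
      integral_const_mul c _
    have hR : ∫ ω, (-X ω) * (-c - m)^4 + (X ω + c) * m^4 ∂μ
        = (-m) * (-c - m)^4 + (m + c) * m^4 := by
      rw [integral_add e1 e2, integral_mul_const, integral_mul_const,
        integral_neg (f := X), integral_add hXint (integrable_const c), integral_const]
      simp [hm_def]
    rw [hL, hR] at hmono
    exact hmono
  have hfinal : c * ∫ ω, (X ω - m) ^ 4 ∂μ ≤ c ^ 5 / 12 :=
    hkey.trans (CH_poly_max c m hc hm1 hm2)
  have hgoal : (∫ ω, (X ω - m) ^ 4 ∂μ) ≤ c ^ 4 / 12 := by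
    rcases eq_or_lt_of_le hc with h0 | h0
    · -- c = 0 : X = 0 a.e., so the integral is 0
      have hX0 : ∀ᵐ ω ∂μ, X ω = 0 := by
        filter_upwards [hbound] with ω h
        have h1 := h.1; have h2 := h.2
        linarith [h0.symm.le]
      have hm0 : m = 0 := by
        rw [hm_def, integral_congr_ae (hX0.mono fun ω h => h)]
        simp
      have : (∫ ω, (X ω - m) ^ 4 ∂μ) = 0 := by
        rw [integral_congr_ae (g := fun _ => (0:ℝ)) ?_]
        · simp
        · filter_upwards [hX0] with ω h
          simp [h, hm0]
      rw [this]
      positivity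
    · have hcne : c ≠ 0 := ne_of_gt h0
      calc (∫ ω, (X ω - m) ^ 4 ∂μ) = c * (∫ ω, (X ω - m) ^ 4 ∂μ) / c := by
              rw [mul_comm, mul_div_assoc, div_self hcne, mul_one]
          _ ≤ (c ^ 5 / 12) / c := by gcongr
          _ = c ^ 4 / 12 := by field_simp
  have : α ^ 8 = c ^ 4 := by rw [hc_def]; ring
  rw [this]
  exact hgoal
end

section
/- Let α ∈ ℝ and β ∈ [0, 1]. Let X be a real random variable on a probability space taking values almost surely in the interval [−(3−β)·α²/2, (1−β)·α²/2], with mean m = E[X]. Then the fourth central moment satisfies E[(X − m)⁴] ≤ (2−β)⁴·α⁸/12. -/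
open MeasureTheory

/-- Chord bound for the convex function `x ↦ (x-m)^4` on `[a,b]`. -/
lemma chord_bound (a b m x : ℝ) (hab : a < b) (h1 : a ≤ x) (h2 : x ≤ b) :
    (b - a) * (x - m) ^ 4 ≤ (b - x) * (a - m) ^ 4 + (x - a) * (b - m) ^ 4 := by
  have hp : 0 ≤ x - a := sub_nonneg.2 h1
  have hq : 0 ≤ b - x := sub_nonneg.2 h2
  have hB : 0 ≤ (x-a)^2 + (x-a)*(b-x) + (b-x)^2 := by positivity
  have key : 6*(b-a)*((b - x) * (a - m) ^ 4 + (x - a) * (b - m) ^ 4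
      - (b - a) * (x - m) ^ 4)
      = (x-a)*(b-x)*(6*(b-a)*(x-m) - 2*((x-a)^2 - (b-x)^2))^2
        + 2*((x-a)*(b-x)*(b-a)^2*((x-a)^2 + (x-a)*(b-x) + (b-x)^2)) := by
    ring
  have hnn : 0 ≤ 6*(b-a)*((b - x) * (a - m) ^ 4 + (x - a) * (b - m) ^ 4
      - (b - a) * (x - m) ^ 4) := by
    rw [key]
    have t1 : 0 ≤ (x-a)*(b-x)*(6*(b-a)*(x-m) - 2*((x-a)^2 - (b-x)^2))^2 :=
      mul_nonneg (mul_nonneg hp hq) (sq_nonneg _)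
    have t2 : 0 ≤ (x-a)*(b-x)*(b-a)^2*((x-a)^2 + (x-a)*(b-x) + (b-x)^2) :=
      mul_nonneg (mul_nonneg (mul_nonneg hp hq) (sq_nonneg _)) hB
    linarith
  nlinarith [hnn, sub_pos.2 hab]

/-- Timelike-background-modified fourth central moment bound: if a random variable
(the generalized Clauser–Horne functional with spacelike fraction `β` and unsharpness
`α`) takes values a.s. in `[−(3−β)·α²/2, (1−β)·α²/2]`, then
`E[(X − m)⁴] ≤ (2−β)⁴·α⁸/12`. -/
theorem modified_fourth_central_moment_bound {Ω : Type*} [MeasurableSpace Ω]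
    (μ : Measure Ω) [IsProbabilityMeasure μ] (α β : ℝ) (hβ : β ∈ Set.Icc (0 : ℝ) 1)
    (X : Ω → ℝ) (hX : Measurable X)
    (hbound : ∀ᵐ ω ∂μ, X ω ∈ Set.Icc (-(3 - β) * α ^ 2 / 2) ((1 - β) * α ^ 2 / 2)) :
    (∫ ω, (X ω - ∫ ω', X ω' ∂μ) ^ 4 ∂μ) ≤ (2 - β) ^ 4 * α ^ 8 / 12 := by
  obtain ⟨hβ0, hβ1⟩ := hβ
  set a : ℝ := -(3 - β) * α ^ 2 / 2 with ha
  set b : ℝ := (1 - β) * α ^ 2 / 2 with hb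
  -- integrability of X
  have hC : ∀ᵐ ω ∂μ, ‖X ω‖ ≤ max |a| |b| := by
    filter_upwards [hbound] with ω ⟨h1, h2⟩
    rw [Real.norm_eq_abs, abs_le]
    constructor
    · calc -(max |a| |b|) ≤ -|a| := by simp
        _ ≤ a := neg_abs_le a
        _ ≤ X ω := h1
    · exact h2.trans ((le_abs_self b).trans (le_max_right _ _))
  have hint : Integrable X μ :=
    Integrable.mono' (integrable_const _) hX.aestronglyMeasurable hC
  set m : ℝ := ∫ ω', X ω' ∂μ with hm
  -- integrability of the fourth power
  have hint4 : Integrable (fun ω => (X ω - m) ^ 4) μ := by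
    refine Integrable.mono' (integrable_const ((max |a| |b| + |m|) ^ 4))
      ((hX.sub measurable_const).pow_const 4).aestronglyMeasurable ?_
    filter_upwards [hC] with ω h
    rw [Real.norm_eq_abs, abs_pow]
    gcongr
    calc |X ω - m| ≤ |X ω| + |m| := abs_sub _ _
      _ ≤ max |a| |b| + |m| := by gcongr; rwa [Real.norm_eq_abs] at h
  rcases eq_or_ne α 0 with hα | hα
  · -- degenerate case: X = 0 a.e.
    have hz : ∀ᵐ ω ∂μ, X ω = 0 := by
      filter_upwards [hbound] with ω ⟨h1, h2⟩
      have : a = 0 := by rw [ha, hα]; ring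
      have hb0 : b = 0 := by rw [hb, hα]; ring
      linarith [this ▸ h1, hb0 ▸ h2]
    have hm0 : m = 0 := by
      rw [hm, integral_congr_ae hz, integral_zero]
    have : (∫ ω, (X ω - m) ^ 4 ∂μ) = 0 := by
      rw [integral_congr_ae (g := fun _ => (0:ℝ)) ?_, integral_zero]
      filter_upwards [hz] with ω h; rw [h, hm0]; ring
    rw [this, hα]
    positivity
  · have hα2 : 0 < α ^ 2 := by positivity
    have hab : a < b := by
      rw [ha, hb]
      have : (2:ℝ) - β > 0 := by linarith
      nlinarith
    have hw : b - a = (2 - β) * α ^ 2 := by rw [ha, hb]; ring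
    have hwpos : (0:ℝ) < b - a := by linarith
    -- mean lies in [a,b]
    have hma : a ≤ m := by
      rw [hm]
      have : a = ∫ _ω, a ∂μ := by simp
      rw [this]
      refine integral_mono_ae (integrable_const _) hint ?_
      filter_upwards [hbound] with ω h using h.1
    have hmb : m ≤ b := by
      rw [hm]
      have : b = ∫ _ω, b ∂μ := by simp
      rw [this]
      refine integral_mono_ae hint (integrable_const _) ?_
      filter_upwards [hbound] with ω h using h.2
    -- chord bound, pointwise
    set c1 : ℝ := (b * (a - m) ^ 4 - a * (b - m) ^ 4) / (b - a) with hc1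
    set c2 : ℝ := ((b - m) ^ 4 - (a - m) ^ 4) / (b - a) with hc2
    have hlin : ∀ x : ℝ, c1 + c2 * x
        = ((b - x) * (a - m) ^ 4 + (x - a) * (b - m) ^ 4) / (b - a) := by
      intro x
      rw [hc1, hc2]
      field_simp
      ring
    have hchord : ∀ᵐ ω ∂μ, (X ω - m) ^ 4 ≤ c1 + c2 * X ω := by
      filter_upwards [hbound] with ω ⟨h1, h2⟩
      have key := chord_bound a b m (X ω) hab h1 h2
      rw [hlin, le_div_iff₀ hwpos]
      nlinarith [key]
    have hintlin : Integrable (fun ω => c1 + c2 * X ω) μ :=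
      (integrable_const c1).add (hint.const_mul c2)
    have step1 : (∫ ω, (X ω - m) ^ 4 ∂μ) ≤ ∫ ω, c1 + c2 * X ω ∂μ :=
      integral_mono_ae hint4 hintlin hchord
    have step2 : (∫ ω, c1 + c2 * X ω ∂μ) = c1 + c2 * m := by
      rw [integral_add (integrable_const c1) (hint.const_mul c2), integral_const,
        integral_const_mul]
      simp [hm]
    rw [step2] at step1
    refine step1.trans ?_
    -- final algebraic bound: c1 + c2 * m ≤ (b-a)^4/12
    have hfin : c1 + c2 * m ≤ (b - a) ^ 4 / 12 := by
      rw [hlin, div_le_div_iff₀ hwpos (by norm_num : (0:ℝ) < 12)]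
      have hu : 0 ≤ m - a := by linarith
      have hv : 0 ≤ b - m := by linarith
      nlinarith [mul_nonneg hwpos.le (sq_nonneg ((b-a)^2 - 6*(m-a)*(b-m))),
        mul_nonneg hu hv]
    refine hfin.trans ?_
    rw [hw]
    have : ((2 - β) * α ^ 2) ^ 4 = (2 - β) ^ 4 * α ^ 8 := by ring
    rw [this]
end

section
/- Let a, a', b, b' ∈ ℝ³ be unit vectors and η_a, η_b, α_a, α_b real numbers, and let 𝓑 be the generalized Clauser–Horne operator built from these data. Then, as an identity of 4×4 complex matrices, 𝓑² + |α_a·α_b|·𝓑 = (α_a²·α_b²/16)·[σ·a, σ·a'] ⊗ [σ·b, σ·b'], where [X, Y] = XY − YX denotes the matrix commutator. -/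
open Matrix Kronecker

noncomputable section

/-- The Pauli matrix σ₁. -/
def σ1 : Matrix (Fin 2) (Fin 2) ℂ := !![0, 1; 1, 0]

/-- The Pauli matrix σ₂. -/
def σ2 : Matrix (Fin 2) (Fin 2) ℂ := !![0, -Complex.I; Complex.I, 0]

/-- The Pauli matrix σ₃. -/
def σ3 : Matrix (Fin 2) (Fin 2) ℂ := !![1, 0; 0, -1]

/-- `σ · n = n₁σ₁ + n₂σ₂ + n₃σ₃` for a real vector `n ∈ ℝ³`. -/
def pauliDot (n : Fin 3 → ℝ) : Matrix (Fin 2) (Fin 2) ℂ :=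
  (n 0 : ℂ) • σ1 + (n 1 : ℂ) • σ2 + (n 2 : ℂ) • σ3

/-- Biased unsharp POVM element `E₊(n) = ((1+η)·I + α·σ·n)/2`. -/
def Eplus (η α : ℝ) (n : Fin 3 → ℝ) : Matrix (Fin 2) (Fin 2) ℂ :=
  ((1 / 2 : ℝ) : ℂ) • (((1 + η : ℝ) : ℂ) • (1 : Matrix (Fin 2) (Fin 2) ℂ)
    + (α : ℂ) • pauliDot n)

/-- The generalized Clauser–Horne operator on ℂ²⊗ℂ². -/
def CHop (ηa ηb αa αb : ℝ) (a a' b b' : Fin 3 → ℝ) :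
    Matrix (Fin 2 × Fin 2) (Fin 2 × Fin 2) ℂ :=
  Eplus ηa αa a ⊗ₖ Eplus ηb αb b - Eplus ηa αa a ⊗ₖ Eplus ηb αb b'
    + Eplus ηa αa a' ⊗ₖ Eplus ηb αb b + Eplus ηa αa a' ⊗ₖ Eplus ηb αb b'
    - ((1 + ηb : ℝ) : ℂ) • (Eplus ηa αa a' ⊗ₖ (1 : Matrix (Fin 2) (Fin 2) ℂ))
    - ((1 + ηa : ℝ) : ℂ) • ((1 : Matrix (Fin 2) (Fin 2) ℂ) ⊗ₖ Eplus ηb αb b)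
    + ((((1 + ηa) * (1 + ηb) - |αa * αb|) / 2 : ℝ) : ℂ) •
        (1 : Matrix (Fin 2 × Fin 2) (Fin 2 × Fin 2) ℂ)

end

noncomputable def chEnt (ηa ηb αa αb : ℝ) (a a' b b' : Fin 3 → ℝ) :
    (Fin 2 × Fin 2) → (Fin 2 × Fin 2) → ℂ := fun p q =>
  (!![!![((-1/2:ℂ)*((|αa*αb|:ℝ):ℂ) + (1/4:ℂ)*(a' 2:ℂ)*(b' 2:ℂ)*(αa:ℂ)*(αb:ℂ) + (1/4:ℂ)*(a' 2:ℂ)*(b 2:ℂ)*(αa:ℂ)*(αb:ℂ) + (-1/4:ℂ)*(a 2:ℂ)*(b' 2:ℂ)*(αa:ℂ)*(αb:ℂ) + (1/4:ℂ)*(a 2:ℂ)*(b 2:ℂ)*(αa:ℂ)*(αb:ℂ)), ((-1/4:ℂ)*(a' 2:ℂ)*(b' 1:ℂ)*(αa:ℂ)*(αb:ℂ)*Complex.I + (1/4:ℂ)*(a' 2:ℂ)*(b' 0:ℂ)*(αa:ℂ)*(αb:ℂ) + (-1/4:ℂ)*(a' 2:ℂ)*(b 1:ℂ)*(αa:ℂ)*(αb:ℂ)*Complex.I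 + (1/4:ℂ)*(a' 2:ℂ)*(b 0:ℂ)*(αa:ℂ)*(αb:ℂ) + (1/4:ℂ)*(a 2:ℂ)*(b' 1:ℂ)*(αa:ℂ)*(αb:ℂ)*Complex.I + (-1/4:ℂ)*(a 2:ℂ)*(b' 0:ℂ)*(αa:ℂ)*(αb:ℂ) + (-1/4:ℂ)*(a 2:ℂ)*(b 1:ℂ)*(αa:ℂ)*(αb:ℂ)*Complex.I + (1/4:ℂ)*(a 2:ℂ)*(b 0:ℂ)*(αa:ℂ)*(αb:ℂ)); ((1/4:ℂ)*(a' 2:ℂ)*(b' 1:ℂ)*(αa:ℂ)*(αb:ℂ)*Complex.I + (1/4:ℂ)*(a' 2:ℂ)*(b' 0:ℂ)*(αa:ℂ)*(αb:ℂ) + (1/4:ℂ)*(a' 2:ℂ)*(b 1:ℂ)*(αa:ℂ)*(αb:ℂ)*Complex.I + (1/4:ℂ)*(a' 2:ℂ)*(b 0:ℂ)*(αa:ℂ)*(αb:ℂ) + (-1/4:ℂ)*(a 2:ℂ)*(b' 1:ℂ)*(αa:ℂ)*(αb:ℂ)*Complex.I + (-1/4:ℂ)*(a 2:ℂ)*(b'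 0:ℂ)*(αa:ℂ)*(αb:ℂ) + (1/4:ℂ)*(a 2:ℂ)*(b 1:ℂ)*(αa:ℂ)*(αb:ℂ)*Complex.I + (1/4:ℂ)*(a 2:ℂ)*(b 0:ℂ)*(αa:ℂ)*(αb:ℂ)), ((-1/2:ℂ)*((|αa*αb|:ℝ):ℂ) + (-1/4:ℂ)*(a' 2:ℂ)*(b' 2:ℂ)*(αa:ℂ)*(αb:ℂ) + (-1/4:ℂ)*(a' 2:ℂ)*(b 2:ℂ)*(αa:ℂ)*(αb:ℂ) + (1/4:ℂ)*(a 2:ℂ)*(b' 2:ℂ)*(αa:ℂ)*(αb:ℂ) + (-1/4:ℂ)*(a 2:ℂ)*(b 2:ℂ)*(αa:ℂ)*(αb:ℂ))],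
 !![((-1/4:ℂ)*(a' 1:ℂ)*(b' 2:ℂ)*(αa:ℂ)*(αb:ℂ)*Complex.I + (-1/4:ℂ)*(a' 1:ℂ)*(b 2:ℂ)*(αa:ℂ)*(αb:ℂ)*Complex.I + (1/4:ℂ)*(a' 0:ℂ)*(b' 2:ℂ)*(αa:ℂ)*(αb:ℂ) + (1/4:ℂ)*(a' 0:ℂ)*(b 2:ℂ)*(αa:ℂ)*(αb:ℂ) + (1/4:ℂ)*(a 1:ℂ)*(b' 2:ℂ)*(αa:ℂ)*(αb:ℂ)*Complex.I + (-1/4:ℂ)*(a 1:ℂ)*(b 2:ℂ)*(αa:ℂ)*(αb:ℂ)*Complex.I + (-1/4:ℂ)*(a 0:ℂ)*(b' 2:ℂ)*(αa:ℂ)*(αb:ℂ) + (1/4:ℂ)*(a 0:ℂ)*(b 2:ℂ)*(αa:ℂ)*(αb:ℂ)), ((1/4:ℂ)*(a' 1:ℂ)*(b' 1:ℂ)*(αa:ℂ)*(αb:ℂ)*Complex.I^2 + (-1/4:ℂ)*(a' 1:ℂ)*(b' 0:ℂ)*(αa:ℂ)*(αb:ℂ)*Complex.I + (1/4:ℂ)*(a'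 1:ℂ)*(b 1:ℂ)*(αa:ℂ)*(αb:ℂ)*Complex.I^2 + (-1/4:ℂ)*(a' 1:ℂ)*(b 0:ℂ)*(αa:ℂ)*(αb:ℂ)*Complex.I + (-1/4:ℂ)*(a' 0:ℂ)*(b' 1:ℂ)*(αa:ℂ)*(αb:ℂ)*Complex.I + (1/4:ℂ)*(a' 0:ℂ)*(b' 0:ℂ)*(αa:ℂ)*(αb:ℂ) + (-1/4:ℂ)*(a' 0:ℂ)*(b 1:ℂ)*(αa:ℂ)*(αb:ℂ)*Complex.I + (1/4:ℂ)*(a' 0:ℂ)*(b 0:ℂ)*(αa:ℂ)*(αb:ℂ) + (-1/4:ℂ)*(a 1:ℂ)*(b' 1:ℂ)*(αa:ℂ)*(αb:ℂ)*Complex.I^2 + (1/4:ℂ)*(a 1:ℂ)*(b' 0:ℂ)*(αa:ℂ)*(αb:ℂ)*Complex.I + (1/4:ℂ)*(a 1:ℂ)*(b 1:ℂ)*(αa:ℂ)*(αb:ℂ)*Complex.I^2 + (-1/4:ℂ)*(a 1:ℂ)*(b 0:ℂ)*(αa:ℂ)*(αb:ℂ)*Complex.I + (1/4:ℂ)*(a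 0:ℂ)*(b' 1:ℂ)*(αa:ℂ)*(αb:ℂ)*Complex.I + (-1/4:ℂ)*(a 0:ℂ)*(b' 0:ℂ)*(αa:ℂ)*(αb:ℂ) + (-1/4:ℂ)*(a 0:ℂ)*(b 1:ℂ)*(αa:ℂ)*(αb:ℂ)*Complex.I + (1/4:ℂ)*(a 0:ℂ)*(b 0:ℂ)*(αa:ℂ)*(αb:ℂ)); ((-1/4:ℂ)*(a' 1:ℂ)*(b' 1:ℂ)*(αa:ℂ)*(αb:ℂ)*Complex.I^2 + (-1/4:ℂ)*(a' 1:ℂ)*(b' 0:ℂ)*(αa:ℂ)*(αb:ℂ)*Complex.I + (-1/4:ℂ)*(a' 1:ℂ)*(b 1:ℂ)*(αa:ℂ)*(αb:ℂ)*Complex.I^2 + (-1/4:ℂ)*(a' 1:ℂ)*(b 0:ℂ)*(αa:ℂ)*(αb:ℂ)*Complex.I + (1/4:ℂ)*(a' 0:ℂ)*(b' 1:ℂ)*(αa:ℂ)*(αb:ℂ)*Complex.I + (1/4:ℂ)*(a' 0:ℂ)*(b' 0:ℂ)*(αa:ℂ)*(αb:ℂ) + (1/4:ℂ)*(a' 0:ℂ)*(b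 1:ℂ)*(αa:ℂ)*(αb:ℂ)*Complex.I + (1/4:ℂ)*(a' 0:ℂ)*(b 0:ℂ)*(αa:ℂ)*(αb:ℂ) + (1/4:ℂ)*(a 1:ℂ)*(b' 1:ℂ)*(αa:ℂ)*(αb:ℂ)*Complex.I^2 + (1/4:ℂ)*(a 1:ℂ)*(b' 0:ℂ)*(αa:ℂ)*(αb:ℂ)*Complex.I + (-1/4:ℂ)*(a 1:ℂ)*(b 1:ℂ)*(αa:ℂ)*(αb:ℂ)*Complex.I^2 + (-1/4:ℂ)*(a 1:ℂ)*(b 0:ℂ)*(αa:ℂ)*(αb:ℂ)*Complex.I + (-1/4:ℂ)*(a 0:ℂ)*(b' 1:ℂ)*(αa:ℂ)*(αb:ℂ)*Complex.I + (-1/4:ℂ)*(a 0:ℂ)*(b' 0:ℂ)*(αa:ℂ)*(αb:ℂ) + (1/4:ℂ)*(a 0:ℂ)*(b 1:ℂ)*(αa:ℂ)*(αb:ℂ)*Complex.I + (1/4:ℂ)*(a 0:ℂ)*(b 0:ℂ)*(αa:ℂ)*(αb:ℂ)), ((1/4:ℂ)*(a' 1:ℂ)*(b' 2:ℂ)*(αa:ℂ)*(αb:ℂ)*Complex.I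 + (1/4:ℂ)*(a' 1:ℂ)*(b 2:ℂ)*(αa:ℂ)*(αb:ℂ)*Complex.I + (-1/4:ℂ)*(a' 0:ℂ)*(b' 2:ℂ)*(αa:ℂ)*(αb:ℂ) + (-1/4:ℂ)*(a' 0:ℂ)*(b 2:ℂ)*(αa:ℂ)*(αb:ℂ) + (-1/4:ℂ)*(a 1:ℂ)*(b' 2:ℂ)*(αa:ℂ)*(αb:ℂ)*Complex.I + (1/4:ℂ)*(a 1:ℂ)*(b 2:ℂ)*(αa:ℂ)*(αb:ℂ)*Complex.I + (1/4:ℂ)*(a 0:ℂ)*(b' 2:ℂ)*(αa:ℂ)*(αb:ℂ) + (-1/4:ℂ)*(a 0:ℂ)*(b 2:ℂ)*(αa:ℂ)*(αb:ℂ))];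
 !![((1/4:ℂ)*(a' 1:ℂ)*(b' 2:ℂ)*(αa:ℂ)*(αb:ℂ)*Complex.I + (1/4:ℂ)*(a' 1:ℂ)*(b 2:ℂ)*(αa:ℂ)*(αb:ℂ)*Complex.I + (1/4:ℂ)*(a' 0:ℂ)*(b' 2:ℂ)*(αa:ℂ)*(αb:ℂ) + (1/4:ℂ)*(a' 0:ℂ)*(b 2:ℂ)*(αa:ℂ)*(αb:ℂ) + (-1/4:ℂ)*(a 1:ℂ)*(b' 2:ℂ)*(αa:ℂ)*(αb:ℂ)*Complex.I + (1/4:ℂ)*(a 1:ℂ)*(b 2:ℂ)*(αa:ℂ)*(αb:ℂ)*Complex.I + (-1/4:ℂ)*(a 0:ℂ)*(b' 2:ℂ)*(αa:ℂ)*(αb:ℂ) + (1/4:ℂ)*(a 0:ℂ)*(b 2:ℂ)*(αa:ℂ)*(αb:ℂ)), ((-1/4:ℂ)*(a' 1:ℂ)*(b' 1:ℂ)*(αa:ℂ)*(αb:ℂ)*Complex.I^2 + (1/4:ℂ)*(a' 1:ℂ)*(b' 0:ℂ)*(αa:ℂ)*(αb:ℂ)*Complex.I + (-1/4:ℂ)*(a'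 1:ℂ)*(b 1:ℂ)*(αa:ℂ)*(αb:ℂ)*Complex.I^2 + (1/4:ℂ)*(a' 1:ℂ)*(b 0:ℂ)*(αa:ℂ)*(αb:ℂ)*Complex.I + (-1/4:ℂ)*(a' 0:ℂ)*(b' 1:ℂ)*(αa:ℂ)*(αb:ℂ)*Complex.I + (1/4:ℂ)*(a' 0:ℂ)*(b' 0:ℂ)*(αa:ℂ)*(αb:ℂ) + (-1/4:ℂ)*(a' 0:ℂ)*(b 1:ℂ)*(αa:ℂ)*(αb:ℂ)*Complex.I + (1/4:ℂ)*(a' 0:ℂ)*(b 0:ℂ)*(αa:ℂ)*(αb:ℂ) + (1/4:ℂ)*(a 1:ℂ)*(b' 1:ℂ)*(αa:ℂ)*(αb:ℂ)*Complex.I^2 + (-1/4:ℂ)*(a 1:ℂ)*(b' 0:ℂ)*(αa:ℂ)*(αb:ℂ)*Complex.I + (-1/4:ℂ)*(a 1:ℂ)*(b 1:ℂ)*(αa:ℂ)*(αb:ℂ)*Complex.I^2 + (1/4:ℂ)*(a 1:ℂ)*(b 0:ℂ)*(αa:ℂ)*(αb:ℂ)*Complex.I + (1/4:ℂ)*(a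 0:ℂ)*(b' 1:ℂ)*(αa:ℂ)*(αb:ℂ)*Complex.I + (-1/4:ℂ)*(a 0:ℂ)*(b' 0:ℂ)*(αa:ℂ)*(αb:ℂ) + (-1/4:ℂ)*(a 0:ℂ)*(b 1:ℂ)*(αa:ℂ)*(αb:ℂ)*Complex.I + (1/4:ℂ)*(a 0:ℂ)*(b 0:ℂ)*(αa:ℂ)*(αb:ℂ)); ((1/4:ℂ)*(a' 1:ℂ)*(b' 1:ℂ)*(αa:ℂ)*(αb:ℂ)*Complex.I^2 + (1/4:ℂ)*(a' 1:ℂ)*(b' 0:ℂ)*(αa:ℂ)*(αb:ℂ)*Complex.I + (1/4:ℂ)*(a' 1:ℂ)*(b 1:ℂ)*(αa:ℂ)*(αb:ℂ)*Complex.I^2 + (1/4:ℂ)*(a' 1:ℂ)*(b 0:ℂ)*(αa:ℂ)*(αb:ℂ)*Complex.I + (1/4:ℂ)*(a' 0:ℂ)*(b' 1:ℂ)*(αa:ℂ)*(αb:ℂ)*Complex.I + (1/4:ℂ)*(a' 0:ℂ)*(b' 0:ℂ)*(αa:ℂ)*(αb:ℂ) + (1/4:ℂ)*(a' 0:ℂ)*(b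 1:ℂ)*(αa:ℂ)*(αb:ℂ)*Complex.I + (1/4:ℂ)*(a' 0:ℂ)*(b 0:ℂ)*(αa:ℂ)*(αb:ℂ) + (-1/4:ℂ)*(a 1:ℂ)*(b' 1:ℂ)*(αa:ℂ)*(αb:ℂ)*Complex.I^2 + (-1/4:ℂ)*(a 1:ℂ)*(b' 0:ℂ)*(αa:ℂ)*(αb:ℂ)*Complex.I + (1/4:ℂ)*(a 1:ℂ)*(b 1:ℂ)*(αa:ℂ)*(αb:ℂ)*Complex.I^2 + (1/4:ℂ)*(a 1:ℂ)*(b 0:ℂ)*(αa:ℂ)*(αb:ℂ)*Complex.I + (-1/4:ℂ)*(a 0:ℂ)*(b' 1:ℂ)*(αa:ℂ)*(αb:ℂ)*Complex.I + (-1/4:ℂ)*(a 0:ℂ)*(b' 0:ℂ)*(αa:ℂ)*(αb:ℂ) + (1/4:ℂ)*(a 0:ℂ)*(b 1:ℂ)*(αa:ℂ)*(αb:ℂ)*Complex.I + (1/4:ℂ)*(a 0:ℂ)*(b 0:ℂ)*(αa:ℂ)*(αb:ℂ)), ((-1/4:ℂ)*(a' 1:ℂ)*(b' 2:ℂ)*(αa:ℂ)*(αb:ℂ)*Complex.I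 + (-1/4:ℂ)*(a' 1:ℂ)*(b 2:ℂ)*(αa:ℂ)*(αb:ℂ)*Complex.I + (-1/4:ℂ)*(a' 0:ℂ)*(b' 2:ℂ)*(αa:ℂ)*(αb:ℂ) + (-1/4:ℂ)*(a' 0:ℂ)*(b 2:ℂ)*(αa:ℂ)*(αb:ℂ) + (1/4:ℂ)*(a 1:ℂ)*(b' 2:ℂ)*(αa:ℂ)*(αb:ℂ)*Complex.I + (-1/4:ℂ)*(a 1:ℂ)*(b 2:ℂ)*(αa:ℂ)*(αb:ℂ)*Complex.I + (1/4:ℂ)*(a 0:ℂ)*(b' 2:ℂ)*(αa:ℂ)*(αb:ℂ) + (-1/4:ℂ)*(a 0:ℂ)*(b 2:ℂ)*(αa:ℂ)*(αb:ℂ))],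
 !![((-1/2:ℂ)*((|αa*αb|:ℝ):ℂ) + (-1/4:ℂ)*(a' 2:ℂ)*(b' 2:ℂ)*(αa:ℂ)*(αb:ℂ) + (-1/4:ℂ)*(a' 2:ℂ)*(b 2:ℂ)*(αa:ℂ)*(αb:ℂ) + (1/4:ℂ)*(a 2:ℂ)*(b' 2:ℂ)*(αa:ℂ)*(αb:ℂ) + (-1/4:ℂ)*(a 2:ℂ)*(b 2:ℂ)*(αa:ℂ)*(αb:ℂ)), ((1/4:ℂ)*(a' 2:ℂ)*(b' 1:ℂ)*(αa:ℂ)*(αb:ℂ)*Complex.I + (-1/4:ℂ)*(a' 2:ℂ)*(b' 0:ℂ)*(αa:ℂ)*(αb:ℂ) + (1/4:ℂ)*(a' 2:ℂ)*(b 1:ℂ)*(αa:ℂ)*(αb:ℂ)*Complex.I + (-1/4:ℂ)*(a' 2:ℂ)*(b 0:ℂ)*(αa:ℂ)*(αb:ℂ) + (-1/4:ℂ)*(a 2:ℂ)*(b' 1:ℂ)*(αa:ℂ)*(αb:ℂ)*Complex.I + (1/4:ℂ)*(a 2:ℂ)*(b' 0:ℂ)*(αa:ℂ)*(αb:ℂ)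 + (1/4:ℂ)*(a 2:ℂ)*(b 1:ℂ)*(αa:ℂ)*(αb:ℂ)*Complex.I + (-1/4:ℂ)*(a 2:ℂ)*(b 0:ℂ)*(αa:ℂ)*(αb:ℂ)); ((-1/4:ℂ)*(a' 2:ℂ)*(b' 1:ℂ)*(αa:ℂ)*(αb:ℂ)*Complex.I + (-1/4:ℂ)*(a' 2:ℂ)*(b' 0:ℂ)*(αa:ℂ)*(αb:ℂ) + (-1/4:ℂ)*(a' 2:ℂ)*(b 1:ℂ)*(αa:ℂ)*(αb:ℂ)*Complex.I + (-1/4:ℂ)*(a' 2:ℂ)*(b 0:ℂ)*(αa:ℂ)*(αb:ℂ) + (1/4:ℂ)*(a 2:ℂ)*(b' 1:ℂ)*(αa:ℂ)*(αb:ℂ)*Complex.I + (1/4:ℂ)*(a 2:ℂ)*(b' 0:ℂ)*(αa:ℂ)*(αb:ℂ) + (-1/4:ℂ)*(a 2:ℂ)*(b 1:ℂ)*(αa:ℂ)*(αb:ℂ)*Complex.I + (-1/4:ℂ)*(a 2:ℂ)*(b 0:ℂ)*(αa:ℂ)*(αb:ℂ)), ((-1/2:ℂ)*((|αa*αb|:ℝ):ℂ)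 + (1/4:ℂ)*(a' 2:ℂ)*(b' 2:ℂ)*(αa:ℂ)*(αb:ℂ) + (1/4:ℂ)*(a' 2:ℂ)*(b 2:ℂ)*(αa:ℂ)*(αb:ℂ) + (-1/4:ℂ)*(a 2:ℂ)*(b' 2:ℂ)*(αa:ℂ)*(αb:ℂ) + (1/4:ℂ)*(a 2:ℂ)*(b 2:ℂ)*(αa:ℂ)*(αb:ℂ))]]
  p.1 q.1) p.2 q.2

set_option maxHeartbeats 1600000 in
theorem CHop_eq (ηa ηb αa αb : ℝ) (a a' b b' : Fin 3 → ℝ) :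
    CHop ηa ηb αa αb a a' b b' = Matrix.of (chEnt ηa ηb αa αb a a' b b') := by
  ext ⟨i, k⟩ ⟨j, l⟩
  fin_cases i <;> fin_cases k <;> fin_cases j <;> fin_cases l <;>
    · simp only [CHop, chEnt, Eplus, pauliDot, σ1, σ2, σ3, Matrix.add_apply,
        Matrix.sub_apply, Matrix.smul_apply, Matrix.kroneckerMap_apply, Matrix.one_apply,
        Matrix.of_apply, Matrix.cons_val', Matrix.cons_val_zero, Matrix.cons_val_one,
        Matrix.head_cons, Matrix.empty_val', Matrix.cons_val_fin_one, Matrix.head_fin_const, Fin.mk_zero, Fin.mk_one, smul_eq_mul,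
        Prod.mk.injEq, ite_true, ite_false, and_true, and_false, true_and, false_and, and_self, Fin.zero_eta, Fin.mk_one, zero_ne_one, one_ne_zero]
      push_cast
      ring


set_option maxHeartbeats 1600000 in
/-- Operator identity for the square of the generalized Clauser–Horne operator. -/
theorem CHop_sq_identity (ηa ηb αa αb : ℝ) (a a' b b' : Fin 3 → ℝ)
    (ha : a 0 ^ 2 + a 1 ^ 2 + a 2 ^ 2 = 1) (ha' : a' 0 ^ 2 + a' 1 ^ 2 + a' 2 ^ 2 = 1)
    (hb : b 0 ^ 2 + b 1 ^ 2 + b 2 ^ 2 = 1) (hb' : b' 0 ^ 2 + b' 1 ^ 2 + b' 2 ^ 2 = 1) :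
    CHop ηa ηb αa αb a a' b b' ^ 2
        + ((|αa * αb| : ℝ) : ℂ) • CHop ηa ηb αa αb a a' b b'
      = ((αa ^ 2 * αb ^ 2 / 16 : ℝ) : ℂ) •
          ((pauliDot a * pauliDot a' - pauliDot a' * pauliDot a) ⊗ₖ
            (pauliDot b * pauliDot b' - pauliDot b' * pauliDot b)) := by
  have haC : (a 0:ℂ)^2 + (a 1:ℂ)^2 + (a 2:ℂ)^2 = 1 := by exact_mod_cast congrArg Complex.ofReal ha
  have ha'C : (a' 0:ℂ)^2 + (a' 1:ℂ)^2 + (a' 2:ℂ)^2 = 1 := by exact_mod_cast congrArg Complex.ofReal ha'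
  have hbC : (b 0:ℂ)^2 + (b 1:ℂ)^2 + (b 2:ℂ)^2 = 1 := by exact_mod_cast congrArg Complex.ofReal hb
  have hb'C : (b' 0:ℂ)^2 + (b' 1:ℂ)^2 + (b' 2:ℂ)^2 = 1 := by exact_mod_cast congrArg Complex.ofReal hb'
  have htC : ((|αa*αb|:ℝ):ℂ)^2 = (αa:ℂ)^2*(αb:ℂ)^2 := by
    rw [← Complex.ofReal_pow, sq_abs]; push_cast; ring
  have hI : Complex.I^2 = -1 := Complex.I_sq
  rw [pow_two, CHop_eq]
  ext ⟨i, k⟩ ⟨j, l⟩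
  fin_cases i <;> fin_cases k <;> fin_cases j <;> fin_cases l <;>
    · simp only [chEnt, pauliDot, σ1, σ2, σ3, Matrix.mul_apply, Fintype.sum_prod_type,
        Fin.sum_univ_two, Matrix.add_apply, Matrix.sub_apply, Matrix.smul_apply,
        Matrix.kroneckerMap_apply, Matrix.of_apply, Matrix.cons_val', Matrix.cons_val_zero,
        Matrix.cons_val_one, Matrix.head_cons, Matrix.empty_val', Matrix.cons_val_fin_one,
        Matrix.head_fin_const, Fin.mk_zero, Fin.mk_one, Fin.zero_eta, smul_eq_mul]
      push_cast
      first
      | linear_combination (0:ℂ) * haC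
      | linear_combination ((1/16:ℂ)*(b' 2:ℂ)^2*(αa:ℂ)^2*(αb:ℂ)^2 + (-1/16:ℂ)*(b' 1:ℂ)^2*(αa:ℂ)^2*(αb:ℂ)^2*Complex.I^2 + (1/16:ℂ)*(b' 0:ℂ)^2*(αa:ℂ)^2*(αb:ℂ)^2 + (-1/8:ℂ)*(b 2:ℂ)*(b' 2:ℂ)*(αa:ℂ)^2*(αb:ℂ)^2 + (1/16:ℂ)*(b 2:ℂ)^2*(αa:ℂ)^2*(αb:ℂ)^2 + (1/8:ℂ)*(b 1:ℂ)*(b' 1:ℂ)*(αa:ℂ)^2*(αb:ℂ)^2*Complex.I^2 + (-1/16:ℂ)*(b 1:ℂ)^2*(αa:ℂ)^2*(αb:ℂ)^2*Complex.I^2 + (-1/8:ℂ)*(b 0:ℂ)*(b' 0:ℂ)*(αa:ℂ)^2*(αb:ℂ)^2 + (1/16:ℂ)*(b 0:ℂ)^2*(αa:ℂ)^2*(αb:ℂ)^2) * haC + ((1/16:ℂ)*(b' 2:ℂ)^2*(αa:ℂ)^2*(αb:ℂ)^2 + (-1/16:ℂ)*(b' 1:ℂ)^2*(αa:ℂ)^2*(αb:ℂ)^2*Complex.I^2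 + (1/16:ℂ)*(b' 0:ℂ)^2*(αa:ℂ)^2*(αb:ℂ)^2 + (1/8:ℂ)*(b 2:ℂ)*(b' 2:ℂ)*(αa:ℂ)^2*(αb:ℂ)^2 + (1/16:ℂ)*(b 2:ℂ)^2*(αa:ℂ)^2*(αb:ℂ)^2 + (-1/8:ℂ)*(b 1:ℂ)*(b' 1:ℂ)*(αa:ℂ)^2*(αb:ℂ)^2*Complex.I^2 + (-1/16:ℂ)*(b 1:ℂ)^2*(αa:ℂ)^2*(αb:ℂ)^2*Complex.I^2 + (1/8:ℂ)*(b 0:ℂ)*(b' 0:ℂ)*(αa:ℂ)^2*(αb:ℂ)^2 + (1/16:ℂ)*(b 0:ℂ)^2*(αa:ℂ)^2*(αb:ℂ)^2) * ha'C + ((1/8:ℂ)*(αa:ℂ)^2*(αb:ℂ)^2 + (-1/16:ℂ)*(a' 1:ℂ)^2*(αa:ℂ)^2*(αb:ℂ)^2 + (-1/16:ℂ)*(a' 1:ℂ)^2*(αa:ℂ)^2*(αb:ℂ)^2*Complex.I^2 + (1/8:ℂ)*(a 2:ℂ)*(a' 2:ℂ)*(αa:ℂ)^2*(αb:ℂ)^2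 + (-1/8:ℂ)*(a 1:ℂ)*(a' 1:ℂ)*(αa:ℂ)^2*(αb:ℂ)^2*Complex.I^2 + (-1/16:ℂ)*(a 1:ℂ)^2*(αa:ℂ)^2*(αb:ℂ)^2 + (-1/16:ℂ)*(a 1:ℂ)^2*(αa:ℂ)^2*(αb:ℂ)^2*Complex.I^2 + (1/8:ℂ)*(a 0:ℂ)*(a' 0:ℂ)*(αa:ℂ)^2*(αb:ℂ)^2) * hbC + ((1/8:ℂ)*(αa:ℂ)^2*(αb:ℂ)^2 + (-1/16:ℂ)*(a' 1:ℂ)^2*(αa:ℂ)^2*(αb:ℂ)^2 + (-1/16:ℂ)*(a' 1:ℂ)^2*(αa:ℂ)^2*(αb:ℂ)^2*Complex.I^2 + (-1/8:ℂ)*(a 2:ℂ)*(a' 2:ℂ)*(αa:ℂ)^2*(αb:ℂ)^2 + (1/8:ℂ)*(a 1:ℂ)*(a' 1:ℂ)*(αa:ℂ)^2*(αb:ℂ)^2*Complex.I^2 + (-1/16:ℂ)*(a 1:ℂ)^2*(αa:ℂ)^2*(αb:ℂ)^2 + (-1/16:ℂ)*(a 1:ℂ)^2*(αa:ℂ)^2*(αb:ℂ)^2*Complex.I^2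 + (-1/8:ℂ)*(a 0:ℂ)*(a' 0:ℂ)*(αa:ℂ)^2*(αb:ℂ)^2) * hb'C + ((-1/4:ℂ)) * htC + ((-1/8:ℂ)*(b' 1:ℂ)^2*(αa:ℂ)^2*(αb:ℂ)^2 + (-1/8:ℂ)*(b 1:ℂ)^2*(αa:ℂ)^2*(αb:ℂ)^2 + (-1/8:ℂ)*(a' 1:ℂ)^2*(αa:ℂ)^2*(αb:ℂ)^2 + (1/16:ℂ)*(a' 1:ℂ)^2*(b' 1:ℂ)^2*(αa:ℂ)^2*(αb:ℂ)^2 + (1/16:ℂ)*(a' 1:ℂ)^2*(b' 1:ℂ)^2*(αa:ℂ)^2*(αb:ℂ)^2*Complex.I^2 + (-1/8:ℂ)*(a' 1:ℂ)^2*(b 2:ℂ)*(b' 2:ℂ)*(αa:ℂ)^2*(αb:ℂ)^2 + (1/8:ℂ)*(a' 1:ℂ)^2*(b 1:ℂ)*(b' 1:ℂ)*(αa:ℂ)^2*(αb:ℂ)^2*Complex.I^2 + (1/16:ℂ)*(a' 1:ℂ)^2*(b 1:ℂ)^2*(αa:ℂ)^2*(αb:ℂ)^2 + (1/16:ℂ)*(a'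 1:ℂ)^2*(b 1:ℂ)^2*(αa:ℂ)^2*(αb:ℂ)^2*Complex.I^2 + (-1/8:ℂ)*(a' 1:ℂ)^2*(b 0:ℂ)*(b' 0:ℂ)*(αa:ℂ)^2*(αb:ℂ)^2 + (1/8:ℂ)*(a 2:ℂ)*(a' 2:ℂ)*(b' 1:ℂ)^2*(αa:ℂ)^2*(αb:ℂ)^2 + (-1/8:ℂ)*(a 2:ℂ)*(a' 2:ℂ)*(b 1:ℂ)^2*(αa:ℂ)^2*(αb:ℂ)^2 + (-1/8:ℂ)*(a 1:ℂ)*(a' 1:ℂ)*(b' 1:ℂ)^2*(αa:ℂ)^2*(αb:ℂ)^2*Complex.I^2 + (1/8:ℂ)*(a 1:ℂ)*(a' 1:ℂ)*(b 1:ℂ)^2*(αa:ℂ)^2*(αb:ℂ)^2*Complex.I^2 + (-1/8:ℂ)*(a 1:ℂ)^2*(αa:ℂ)^2*(αb:ℂ)^2 + (1/16:ℂ)*(a 1:ℂ)^2*(b' 1:ℂ)^2*(αa:ℂ)^2*(αb:ℂ)^2 + (1/16:ℂ)*(a 1:ℂ)^2*(b' 1:ℂ)^2*(αa:ℂ)^2*(αb:ℂ)^2*Complex.I^2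 + (1/8:ℂ)*(a 1:ℂ)^2*(b 2:ℂ)*(b' 2:ℂ)*(αa:ℂ)^2*(αb:ℂ)^2 + (-1/8:ℂ)*(a 1:ℂ)^2*(b 1:ℂ)*(b' 1:ℂ)*(αa:ℂ)^2*(αb:ℂ)^2*Complex.I^2 + (1/16:ℂ)*(a 1:ℂ)^2*(b 1:ℂ)^2*(αa:ℂ)^2*(αb:ℂ)^2 + (1/16:ℂ)*(a 1:ℂ)^2*(b 1:ℂ)^2*(αa:ℂ)^2*(αb:ℂ)^2*Complex.I^2 + (1/8:ℂ)*(a 1:ℂ)^2*(b 0:ℂ)*(b' 0:ℂ)*(αa:ℂ)^2*(αb:ℂ)^2 + (1/8:ℂ)*(a 0:ℂ)*(a' 0:ℂ)*(b' 1:ℂ)^2*(αa:ℂ)^2*(αb:ℂ)^2 + (-1/8:ℂ)*(a 0:ℂ)*(a' 0:ℂ)*(b 1:ℂ)^2*(αa:ℂ)^2*(αb:ℂ)^2) * hI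
end

section
/- For every real k ≥ 1, ∫₀^∞ e^{−x₂} (∫_{x₂/k}^{k·x₂} e^{−x₁} dx₁) dx₂ = (k−1)/(k+1). Consequently, for every β ∈ [0, 1), taking k = (1+β)/(1−β) the value of this double integral equals β. -/
open MeasureTheory

lemma integral_exp_neg_mul_Ioi_zero {b : ℝ} (hb : 0 < b) :
    ∫ x in Set.Ioi (0 : ℝ), Real.exp (-(b * x)) = 1 / b := by
  have hderiv : ∀ x ∈ Set.Ici (0 : ℝ),
      HasDerivAt (fun x : ℝ => -Real.exp (-(b * x)) / b) (Real.exp (-(b * x))) x := by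
    intro x _
    have h : HasDerivAt (fun x : ℝ => -(b * x)) (-b) x := by
      simpa using ((hasDerivAt_id x).const_mul b).fun_neg
    have := (h.exp.fun_neg.div_const b)
    refine this.congr_deriv ?_
    rw [mul_neg, neg_neg, mul_div_assoc, div_self hb.ne', mul_one]
  have hint : IntegrableOn (fun x : ℝ => Real.exp (-(b * x))) (Set.Ioi 0) := by
    simpa [neg_mul] using exp_neg_integrableOn_Ioi 0 hb
  have hlim : Filter.Tendsto (fun x : ℝ => -Real.exp (-(b * x))) Filter.atTop (nhds 0) := by
    have h1 : Filter.Tendsto (fun x : ℝ => b * x) Filter.atTop Filter.atTop :=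
      Filter.Tendsto.const_mul_atTop hb Filter.tendsto_id
    have h2 : Filter.Tendsto (fun x : ℝ => -(b * x)) Filter.atTop Filter.atBot :=
      Filter.tendsto_neg_atTop_atBot.comp h1
    simpa using (Real.tendsto_exp_atBot.comp h2).neg
  have hlim' : Filter.Tendsto (fun x : ℝ => -Real.exp (-(b * x)) / b) Filter.atTop (nhds 0) := by
    simpa using hlim.div_const b
  have := integral_Ioi_of_hasDerivAt_of_tendsto' hderiv hint hlim'
  rw [this]
  simp
  ring

/-- The fraction of spacelike separated decay events: for every `k ≥ 1`,
`∫₀^∞ e^{−x₂} (∫_{x₂/k}^{k·x₂} e^{−x₁} dx₁) dx₂ = (k−1)/(k+1)`; consequently for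
`β ∈ [0,1)` and `k = (1+β)/(1−β)` the double integral equals `β`. -/
theorem spacelike_fraction :
    (∀ k : ℝ, 1 ≤ k →
      (∫ x₂ in Set.Ioi (0 : ℝ),
          Real.exp (-x₂) * ∫ x₁ in (x₂ / k)..(k * x₂), Real.exp (-x₁))
        = (k - 1) / (k + 1)) ∧
    (∀ β : ℝ, β ∈ Set.Ico (0 : ℝ) 1 →
      (∫ x₂ in Set.Ioi (0 : ℝ),
          Real.exp (-x₂) *
            ∫ x₁ in (x₂ / ((1 + β) / (1 - β)))..(((1 + β) / (1 - β)) * x₂),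
              Real.exp (-x₁))
        = β) := by
  have main : ∀ k : ℝ, 1 ≤ k →
      (∫ x₂ in Set.Ioi (0 : ℝ),
          Real.exp (-x₂) * ∫ x₁ in (x₂ / k)..(k * x₂), Real.exp (-x₁))
        = (k - 1) / (k + 1) := by
    intro k hk
    have hk0 : (0 : ℝ) < k := lt_of_lt_of_le one_pos hk
    have hinner : ∀ x : ℝ,
        (∫ x₁ in (x / k)..(k * x), Real.exp (-x₁))
          = Real.exp (-(x / k)) - Real.exp (-(k * x)) := by
      intro x
      rw [intervalIntegral.integral_comp_neg (fun y => Real.exp y)]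
      rw [integral_exp]
    have heq : (∫ x₂ in Set.Ioi (0 : ℝ),
          Real.exp (-x₂) * ∫ x₁ in (x₂ / k)..(k * x₂), Real.exp (-x₁))
        = ∫ x in Set.Ioi (0 : ℝ),
            (Real.exp (-((1 + 1/k) * x)) - Real.exp (-((1 + k) * x))) := by
      congr 1
      funext x
      rw [hinner, mul_sub, ← Real.exp_add, ← Real.exp_add]
      congr 1 <;> field_simp <;> ring
    have hb1 : (0 : ℝ) < 1 + 1/k := by positivity
    have hb2 : (0 : ℝ) < 1 + k := by linarith
    have hi1 : IntegrableOn (fun x : ℝ => Real.exp (-((1 + 1/k) * x))) (Set.Ioi 0) := by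
      have h : (fun x : ℝ => Real.exp (-((1 + 1/k) * x)))
          = fun x => Real.exp (-(1 + 1/k) * x) := by funext x; ring_nf
      rw [h]; exact exp_neg_integrableOn_Ioi 0 hb1
    have hi2 : IntegrableOn (fun x : ℝ => Real.exp (-((1 + k) * x))) (Set.Ioi 0) := by
      have h : (fun x : ℝ => Real.exp (-((1 + k) * x)))
          = fun x => Real.exp (-(1 + k) * x) := by funext x; ring_nf
      rw [h]; exact exp_neg_integrableOn_Ioi 0 hb2
    rw [heq, integral_sub hi1 hi2, integral_exp_neg_mul_Ioi_zero hb1,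
      integral_exp_neg_mul_Ioi_zero hb2]
    field_simp
    ring
  refine ⟨main, fun β hβ => ?_⟩
  obtain ⟨hβ0, hβ1⟩ := hβ
  have h1 : (0 : ℝ) < 1 - β := by linarith
  have hk : 1 ≤ (1 + β) / (1 - β) := by
    rw [le_div_iff₀ h1]; linarith
  rw [main _ hk]
  field_simp
  ring
end

section
/- Let α, φ ∈ ℝ. Let ρ = |ψ⟩⟨ψ| on ℂ²⊗ℂ² with |ψ⟩ = (|01⟩ − |10⟩)/√2, and let 𝓑 be the generalized Clauser–Horne operator with bias η_a = η_b = 0, unsharpness α_a = α, α_b = −α, and directions a = (1,0,0), a' = (0,1,0), b = (cos φ, sin φ, 0), b' = (−sin φ, cos φ, 0). Then Tr(ρ·𝓑) = (α²/2)·(cos φ + sin φ − 1). Moreover, for all φ, Tr(ρ·𝓑) ≤ (√2 − 1)·α²/2, with equality at φ = π/4. -/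
open Matrix Kronecker

noncomputable section

/-- The spin-singlet state vector `|ψ⟩ = (|01⟩ − |10⟩)/√2` on ℂ²⊗ℂ². -/
def singletVec : Fin 2 × Fin 2 → ℂ := fun i =>
  if i = (0, 1) then ((1 / Real.sqrt 2 : ℝ) : ℂ)
  else if i = (1, 0) then (-(1 / Real.sqrt 2 : ℝ) : ℂ) else 0

/-- The spin-singlet density matrix `ρ = |ψ⟩⟨ψ|`. -/
def singletRho : Matrix (Fin 2 × Fin 2) (Fin 2 × Fin 2) ℂ :=
  Matrix.of fun i j => singletVec i * (starRingEnd ℂ) (singletVec j)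

/-- The generalized CH operator with bias `0`, unsharpness `α, −α`, and directions
`a = (1,0,0)`, `a' = (0,1,0)`, `b = (cos φ, sin φ, 0)`, `b' = (−sin φ, cos φ, 0)`. -/
def Bop (α φ : ℝ) : Matrix (Fin 2 × Fin 2) (Fin 2 × Fin 2) ℂ :=
  CHop 0 0 α (-α) ![1, 0, 0] ![0, 1, 0] ![Real.cos φ, Real.sin φ, 0]
    ![-Real.sin φ, Real.cos φ, 0]

end


set_option maxHeartbeats 2000000 in
private lemma singlet_CH_key (α φ : ℝ) : Matrix.trace (singletRho * Bop α φ)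
      = ((α ^ 2 / 2 * (Real.cos φ + Real.sin φ - 1) : ℝ) : ℂ) := by
  have h2 : (Real.sqrt 2) * Real.sqrt 2 = 2 := Real.mul_self_sqrt (by norm_num)
  have hs : Real.sqrt 2 ≠ 0 := by positivity
  simp only [Matrix.trace, Matrix.diag, Matrix.mul_apply, singletRho, Bop, CHop, Eplus,
    pauliDot, σ1, σ2, σ3, singletVec, Fintype.sum_prod_type, Fin.sum_univ_two,
    Matrix.sub_apply, Matrix.add_apply, Matrix.smul_apply, Matrix.one_apply,
    Matrix.kroneckerMap_apply, Matrix.of_apply, Matrix.cons_val', Matrix.cons_val_zero,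
    Matrix.cons_val_one, Matrix.cons_val_two, Matrix.head_cons, Matrix.empty_val', Matrix.cons_val_fin_one,
    Matrix.head_fin_const, smul_eq_mul]
  norm_num [Prod.ext_iff, abs_mul, Complex.ext_iff, ← Complex.ofReal_sin, ← Complex.ofReal_cos,
    Complex.div_re, Complex.div_im, Complex.normSq, ← Complex.ofReal_pow, Complex.ofReal_re,
    Complex.ofReal_im]
  have h : Real.sqrt 2 / 2 * (Real.sqrt 2 / 2) = 1 / 2 := by
    rw [div_mul_div_comm, h2]; norm_num
  constructor <;> rw [h] <;> ring

/-- For the spin singlet, `Tr(ρ·𝓑) = (α²/2)(cos φ + sin φ − 1)`; it is at most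
`(√2 − 1)·α²/2` for every `φ`, with equality at `φ = π/4`. -/
theorem singlet_CH_expectation (α φ : ℝ) :
    Matrix.trace (singletRho * Bop α φ)
      = ((α ^ 2 / 2 * (Real.cos φ + Real.sin φ - 1) : ℝ) : ℂ) ∧
    (Matrix.trace (singletRho * Bop α φ)).re ≤ (Real.sqrt 2 - 1) * α ^ 2 / 2 ∧
    Matrix.trace (singletRho * Bop α (Real.pi / 4))
      = (((Real.sqrt 2 - 1) * α ^ 2 / 2 : ℝ) : ℂ) := by
  have h2 : (Real.sqrt 2) * Real.sqrt 2 = 2 := Real.mul_self_sqrt (by norm_num)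
  refine ⟨singlet_CH_key α φ, ?_, ?_⟩
  · rw [singlet_CH_key α φ, Complex.ofReal_re]
    have hcs : Real.cos φ + Real.sin φ ≤ Real.sqrt 2 := by
      nlinarith [Real.sin_sq_add_cos_sq φ, sq_nonneg (Real.cos φ - Real.sin φ),
        sq_nonneg (Real.cos φ + Real.sin φ - Real.sqrt 2), Real.sqrt_nonneg 2]
    nlinarith [sq_nonneg α]
  · rw [singlet_CH_key α (Real.pi / 4)]
    rw [Real.cos_pi_div_four, Real.sin_pi_div_four]
    norm_num
    ring_nf
end

section
/- Let α, φ ∈ ℝ. Let ρ = |ψ⟩⟨ψ| on ℂ²⊗ℂ² with |ψ⟩ = (|01⟩ − |10⟩)/√2, and let 𝓑 be the generalized Clauser–Horne operator with bias η_a = η_b = 0, unsharpness α_a = α, α_b = −α, and directions a = (1,0,0), a' = (0,1,0), b = (cos φ, sin φ, 0), b' = (−sin φ, cos φ, 0). Writing ⟨X⟩ = Tr(ρ·X), the third cumulant κ₃ = ⟨𝓑³⟩ − 3⟨𝓑⟩⟨𝓑²⟩ + 2⟨𝓑⟩³ equals −(√2/8)·α⁶·(sin(φ + π/4) − sin(3φ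 − π/4)). -/
open Matrix Kronecker

noncomputable section

/-- The third cumulant `κ₃ = ⟨𝓑³⟩ − 3⟨𝓑⟩⟨𝓑²⟩ + 2⟨𝓑⟩³` of the generalized CH
operator in the spin-singlet state, with `⟨X⟩ = Tr(ρ·X)`. -/
def kappa3 (α φ : ℝ) : ℂ :=
  Matrix.trace (singletRho * Bop α φ ^ 3)
    - 3 * Matrix.trace (singletRho * Bop α φ) * Matrix.trace (singletRho * Bop α φ ^ 2)
    + 2 * Matrix.trace (singletRho * Bop α φ) ^ 3

end

noncomputable section
-- explicit rho
def rho' : Matrix (Fin 2 × Fin 2) (Fin 2 × Fin 2) ℂ :=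
  Matrix.of fun i j =>
    if i = ((0:Fin 2), (1:Fin 2)) then (if j = (0,1) then 1/2 else if j = (1,0) then -(1/2) else 0)
    else if i = ((1:Fin 2), (0:Fin 2)) then (if j = (0,1) then -(1/2) else if j = (1,0) then 1/2 else 0)
    else 0

lemma rho_eq : singletRho = rho' := by
  have h2 : ((Real.sqrt 2 : ℝ) : ℂ) * ((Real.sqrt 2 : ℝ) : ℂ) = 2 := by
    norm_cast; exact Real.mul_self_sqrt (by norm_num)
  ext ⟨i,j⟩ ⟨k,l⟩
  fin_cases i <;> fin_cases j <;> fin_cases k <;> fin_cases l <;>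
    simp (config := { decide := true }) [singletRho, singletVec, rho', map_inv₀, Complex.conj_ofReal] <;>
    rw [← mul_inv, h2]
end

noncomputable section
def Bmat (α φ : ℝ) : Matrix (Fin 2 × Fin 2) (Fin 2 × Fin 2) ℂ :=
  Matrix.of fun i j =>
    if i = j then -((α:ℂ)^2/2)
    else if i = ((0:Fin 2),(1:Fin 2)) ∧ j = ((1:Fin 2),(0:Fin 2)) then
      (α:ℂ)^2 * ((-1/2 - Complex.I/2) * (Real.sin φ : ℂ) + (-1/2 + Complex.I/2) * (Real.cos φ : ℂ))
    else if i = ((1:Fin 2),(0:Fin 2)) ∧ j = ((0:Fin 2),(1:Fin 2)) then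
      (α:ℂ)^2 * ((-1/2 + Complex.I/2) * (Real.sin φ : ℂ) + (-1/2 - Complex.I/2) * (Real.cos φ : ℂ))
    else 0
end

set_option maxHeartbeats 2000000 in
lemma Bop_eq (α φ : ℝ) : Bop α φ = Bmat α φ := by
  have habs : |α * -α| = α ^ 2 := by
    rw [mul_neg, abs_neg, abs_mul_self, sq]
  ext ⟨i,j⟩ ⟨k,l⟩
  fin_cases i <;> fin_cases j <;> fin_cases k <;> fin_cases l <;>
    simp (config := { decide := true }) [Bop, CHop, Eplus, pauliDot, σ1, σ2, σ3, Bmat,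
      Matrix.kroneckerMap_apply, Matrix.one_apply, habs, Matrix.smul_apply,
      Matrix.add_apply, Matrix.sub_apply] <;>
    push_cast <;> ring_nf <;> simp only [Complex.I_sq] <;> ring_nf

set_option maxHeartbeats 2000000 in
lemma tr1 (α φ : ℝ) : Matrix.trace (singletRho * Bop α φ)
    = ((α^2 * (Real.cos φ + Real.sin φ - 1)/2 : ℝ) : ℂ) := by
  rw [rho_eq, Bop_eq]
  simp (config := { decide := true }) [Matrix.trace, Matrix.diag, Matrix.mul_apply,
    Fintype.sum_prod_type, Fin.sum_univ_two, rho', Bmat]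
  try push_cast
  try ring_nf
  try simp only [Complex.I_sq]
  try ring_nf

set_option maxHeartbeats 4000000 in
lemma tr2 (α φ : ℝ) : Matrix.trace (singletRho * Bop α φ ^ 2)
    = ((α^4 * (1/4 - Real.sin φ/2 + Real.sin φ^2/2 - Real.cos φ/2 + Real.cos φ^2/2) : ℝ) : ℂ) := by
  rw [rho_eq, Bop_eq]
  simp (config := { decide := true }) [Matrix.trace, Matrix.diag, Matrix.mul_apply,
    pow_succ, pow_zero, Matrix.one_mul, Fintype.sum_prod_type, Fin.sum_univ_two, rho', Bmat]
  try push_cast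
  try ring_nf
  try simp only [Complex.I_sq]
  try ring_nf

set_option maxHeartbeats 8000000 in
lemma tr3 (α φ : ℝ) : Matrix.trace (singletRho * Bop α φ ^ 3)
    = ((α^6 * (-1/8 + 3/8*Real.sin φ - 3/4*Real.sin φ^2 + 1/4*Real.sin φ^3 + 3/8*Real.cos φ
        + 1/4*Real.cos φ*Real.sin φ^2 - 3/4*Real.cos φ^2 + 1/4*Real.cos φ^2*Real.sin φ
        + 1/4*Real.cos φ^3) : ℝ) : ℂ) := by
  rw [rho_eq, Bop_eq]
  simp (config := { decide := true }) [Matrix.trace, Matrix.diag, Matrix.mul_apply,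
    pow_succ, pow_zero, Matrix.one_mul, Fintype.sum_prod_type, Fin.sum_univ_two, rho', Bmat]
  try push_cast
  try ring_nf
  try simp only [Complex.I_sq]
  try ring_nf


/-- Third cumulant of the CH operator in the spin singlet:
`κ₃ = −(√2/8)·α⁶·(sin(φ + π/4) − sin(3φ − π/4))`. -/
theorem singlet_CH_third_cumulant (α φ : ℝ) :
    kappa3 α φ
      = ((-(Real.sqrt 2 / 8) * α ^ 6 *
          (Real.sin (φ + Real.pi / 4) - Real.sin (3 * φ - Real.pi / 4)) : ℝ) : ℂ) := by
  have h2 : Real.sqrt 2 * Real.sqrt 2 = 2 := Real.mul_self_sqrt (by norm_num)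
  have hpyth := Real.sin_sq_add_cos_sq φ
  set s := Real.sin φ with hs
  set c := Real.cos φ with hc
  have key : (α^6 * (-1/8 + 3/8*s - 3/4*s^2 + 1/4*s^3 + 3/8*c
        + 1/4*c*s^2 - 3/4*c^2 + 1/4*c^2*s + 1/4*c^3))
      - 3 * (α^2 * (c + s - 1)/2) * (α^4 * (1/4 - s/2 + s^2/2 - c/2 + c^2/2))
      + 2 * (α^2 * (c + s - 1)/2)^3
      = -(Real.sqrt 2 / 8) * α ^ 6 *
          (Real.sin (φ + Real.pi / 4) - Real.sin (3 * φ - Real.pi / 4)) := by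
    rw [Real.sin_add, Real.sin_sub, Real.sin_three_mul, Real.cos_three_mul,
      Real.sin_pi_div_four, Real.cos_pi_div_four, ← hs, ← hc]
    linear_combination ((α^6/4)*(s+c))*hpyth + ((α^6/16)*(4*s^3+4*c^3-2*s-2*c))*h2
  rw [kappa3, tr1, tr2, tr3, ← hs, ← hc]
  rw [← key]
  push_cast
  ring
end
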